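/- arXiv:1602.03301 — 4 statements merged into one kernel-verified Lean document; each statement's English description precedes it below -/
import Mathlib

section
/- Let N ≥ 1, p ≥ 2, a₃ > 0, and let A : (0,∞) → [0,∞) be locally absolutely continuous and satisfy, for almost every s > 0, A(s) ≥ a₃ s^(p-2) and A(s) + s·A'(s) ≥ a₃ s^(p-2). Define φ : ℝ^N → ℝ^N by φ(z) = A(|z|)z for z ≠ 0 and φ(0) = 0. Then there exists a constant C₁ > 0, depending only on p and a₃, such that for all ξ, ζ ∈ ℝ^N with (ξ,ζ) ≠ (0,0): (φ(ξ) − φ(ζ)) · (ξ − ζ) ≥ C₁ |ξ − ζ|^p. (Degenerate case of Lemma 4.1(i).) -/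
open MeasureTheory RealInnerProductSpace

section Helpers
open Set


lemma fubini_primitive {g : ℝ → ℝ} {a b : ℝ} (hab : a ≤ b)
    (hg : IntegrableOn g (Ioc a b)) :
    ∫ t in Ioc a b, (∫ s in Ioc a t, g s) = ∫ s in Ioc a b, (b - s) * g s := by
  set μ := volume.restrict (Ioc a b)
  set D : Set (ℝ × ℝ) := {q : ℝ × ℝ | a < q.2 ∧ q.2 ≤ q.1} with hD
  have hDm : MeasurableSet D := by
    exact (measurableSet_lt measurable_const measurable_snd).inter
      (measurableSet_le measurable_snd measurable_fst)
  set H : ℝ × ℝ → ℝ := D.indicator (fun q => g q.2) with hH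
  have hgasm : AEStronglyMeasurable g μ := hg.aestronglyMeasurable
  have hcomp : Integrable (fun q : ℝ × ℝ => g q.2) (μ.prod μ) := by
    have hmap : (μ.prod μ).map Prod.snd = (μ univ) • μ := Measure.map_snd_prod
    have h1 : Integrable g ((μ univ) • μ) := by
      refine hg.smul_measure ?_
      simp only [μ, Measure.restrict_apply_univ]
      exact (measure_Ioc_lt_top).ne
    rw [← hmap] at h1
    exact (integrable_map_measure h1.aestronglyMeasurable
      measurable_snd.aemeasurable).mp h1
  have hHint : Integrable H (μ.prod μ) := hcomp.indicator hDm
  have hswap := integral_integral_swap (f := fun t s => H (t, s)) hHint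
  have hL : ∫ t, (∫ s, H (t, s) ∂μ) ∂μ = ∫ t in Ioc a b, (∫ s in Ioc a t, g s) := by
    refine setIntegral_congr_fun measurableSet_Ioc (fun t ht => ?_)
    have h1 : (fun s => H (t, s)) = (Ioc a t).indicator g := by
      funext s
      by_cases hs : s ∈ Ioc a t
      · rw [indicator_of_mem hs]
        exact indicator_of_mem (by exact ⟨hs.1, hs.2⟩) _
      · rw [indicator_of_notMem hs]
        exact indicator_of_notMem (by simpa [D, Ioc, mem_setOf_eq] using hs) _
    rw [h1, setIntegral_indicator measurableSet_Ioc,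
      inter_eq_right.mpr (Ioc_subset_Ioc le_rfl ht.2)]
  have hR : ∫ s, (∫ t, H (t, s) ∂μ) ∂μ = ∫ s in Ioc a b, (b - s) * g s := by
    refine setIntegral_congr_fun measurableSet_Ioc (fun s hs => ?_)
    have h1 : (fun t => H (t, s)) = (Ici s).indicator (fun _ => g s) := by
      funext t
      by_cases ht : t ∈ Ici s
      · rw [indicator_of_mem ht]
        exact indicator_of_mem (by exact ⟨hs.1, ht⟩) _
      · rw [indicator_of_notMem ht]
        refine indicator_of_notMem ?_ _
        simp only [D, mem_setOf_eq, not_and]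
        intro _; exact ht
    have h2 : Ioc a b ∩ Ici s = Icc s b := by
      rw [inter_comm]
      ext t
      simp only [mem_inter_iff, mem_Ici, mem_Ioc, mem_Icc]
      exact ⟨fun h => ⟨h.1, h.2.2⟩, fun h => ⟨h.1, lt_of_lt_of_le hs.1 h.1, h.2⟩⟩
    rw [h1, setIntegral_indicator measurableSet_Ici, h2, setIntegral_const,
      Real.volume_real_Icc_of_le (by linarith [hs.2]), smul_eq_mul]
  rw [hL, hR] at hswap
  exact hswap


lemma contA {A A' : ℝ → ℝ}
    (hFTC : ∀ a b : ℝ, 0 < a → a ≤ b →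
      IntervalIntegrable A' volume a b ∧ A b = A a + ∫ t in a..b, A' t)
    {x : ℝ} (hx : 0 < x) : ContinuousAt A x := by
  set c := x / 2 with hcdef
  have hc : 0 < c := by positivity
  have hcx : c < x := by simp only [hcdef]; linarith
  have hx2 : x < 2 * x := by linarith
  have hint : IntervalIntegrable A' volume c (2 * x) :=
    (hFTC c (2 * x) hc (by linarith)).1
  have hcont : ContinuousOn (fun y => ∫ t in c..y, A' t) (uIcc c (2 * x)) :=
    intervalIntegral.continuousOn_primitive_interval' hint left_mem_uIcc
  have huIcc : uIcc c (2 * x) = Icc c (2 * x) := uIcc_of_le (by linarith)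
  have hmem : Icc c (2 * x) ∈ nhds x := Icc_mem_nhds hcx hx2
  have h2 : ContinuousAt (fun y => A c + ∫ t in c..y, A' t) x :=
    continuousAt_const.add ((hcont.mono huIcc.ge).continuousAt hmem)
  refine h2.congr ?_
  refine Filter.eventuallyEq_of_mem (Ioo_mem_nhds hcx hx2) (fun y hy => ?_)
  exact ((hFTC c y hc hy.1.le).2).symm

lemma ptwise {p a₃ : ℝ} {A : ℝ → ℝ} (hcont : ∀ x : ℝ, 0 < x → ContinuousAt A x)
    (hae : ∀ᵐ s : ℝ ∂volume, 0 < s → a₃ * s ^ (p - 2) ≤ A s) :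
    ∀ s : ℝ, 0 < s → a₃ * s ^ (p - 2) ≤ A s := by
  intro s hs
  by_contra hlt
  push_neg at hlt
  have hgc : ContinuousAt (fun t : ℝ => a₃ * t ^ (p - 2)) s :=
    continuousAt_const.mul (Real.continuousAt_rpow_const s (p - 2) (Or.inl hs.ne'))
  have h1 : ∀ᶠ t in nhds s, A t < a₃ * t ^ (p - 2) :=
    (hcont s hs).eventually_lt hgc hlt
  have h2 : ∀ᶠ t in nhds s, 0 < t := eventually_gt_nhds hs
  have hE : {t : ℝ | A t < a₃ * t ^ (p - 2) ∧ 0 < t} ∈ nhds s := (h1.and h2)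
  obtain ⟨U, hUE, hUopen, hsU⟩ := mem_nhds_iff.mp hE
  have hnull : volume {t : ℝ | ¬(0 < t → a₃ * t ^ (p - 2) ≤ A t)} = 0 := hae
  have hsub : U ⊆ {t : ℝ | ¬(0 < t → a₃ * t ^ (p - 2) ≤ A t)} := by
    intro t ht
    have := hUE ht
    simp only [mem_setOf_eq, not_forall] at this ⊢
    exact ⟨this.2, not_le.mpr this.1⟩
  have := measure_mono_null hsub hnull
  exact (hUopen.measure_pos volume ⟨s, hsU⟩).ne' this

lemma ftc_id {A A' : ℝ → ℝ}
    (hFTC : ∀ a b : ℝ, 0 < a → a ≤ b →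
      IntervalIntegrable A' volume a b ∧ A b = A a + ∫ t in a..b, A' t)
    (hcont : ∀ x : ℝ, 0 < x → ContinuousAt A x)
    {a b : ℝ} (ha : 0 < a) (hab : a ≤ b) :
    b * A b - a * A a = ∫ t in a..b, (A t + t * A' t) := by
  have hA' : IntervalIntegrable A' volume a b := (hFTC a b ha hab).1
  have hAcont : ContinuousOn A (uIcc a b) := by
    intro y hy
    rw [uIcc_of_le hab] at hy
    exact (hcont y (lt_of_lt_of_le ha hy.1)).continuousWithinAt
  have hAint : IntervalIntegrable A volume a b := hAcont.intervalIntegrable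
  have htA' : IntervalIntegrable (fun t => t * A' t) volume a b :=
    hA'.continuousOn_mul continuous_id.continuousOn
  have hA'on : IntegrableOn A' (Ioc a b) :=
    (intervalIntegrable_iff_integrableOn_Ioc_of_le hab).mp hA'
  have hbsA' : IntegrableOn (fun s => (b - s) * A' s) (Ioc a b) := by
    have : IntervalIntegrable (fun s => (b - s) * A' s) volume a b :=
      hA'.continuousOn_mul (continuous_const.sub continuous_id).continuousOn
    exact (intervalIntegrable_iff_integrableOn_Ioc_of_le hab).mp this
  have hsA' : IntegrableOn (fun s => s * A' s) (Ioc a b) :=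
    (intervalIntegrable_iff_integrableOn_Ioc_of_le hab).mp htA'
  have hprim : IntegrableOn (fun t => ∫ s in Ioc a t, A' s) (Ioc a b) := by
    have h1 : IntegrableOn A' (Icc a b) :=
      (integrableOn_Icc_iff_integrableOn_Ioc).mpr hA'on
    have h2 : ContinuousOn (fun t => ∫ s in Ioc a t, A' s) (Icc a b) :=
      intervalIntegral.continuousOn_primitive h1
    exact (h2.integrableOn_Icc).mono_set Ioc_subset_Icc_self
  have hAeq : ∫ t in a..b, A t
      = A a * (b - a) + ∫ s in Ioc a b, (b - s) * A' s := by
    rw [intervalIntegral.integral_of_le hab, ← fubini_primitive hab hA'on]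
    have h3 : ∀ t ∈ Ioc a b, A t = A a + ∫ s in Ioc a t, A' s := by
      intro t ht
      rw [(hFTC a t ha ht.1.le).2, intervalIntegral.integral_of_le ht.1.le]
    rw [setIntegral_congr_fun measurableSet_Ioc h3, integral_add _ hprim]
    · congr 1
      simp [Real.volume_Ioc, ENNReal.toReal_ofReal (by linarith : (0:ℝ) ≤ b - a), mul_comm, hab]
    · exact integrableOn_const (by simp [Real.volume_Ioc])
  have htA'eq : ∫ t in a..b, t * A' t = ∫ s in Ioc a b, s * A' s :=
    intervalIntegral.integral_of_le hab
  have hsum : ∫ s in Ioc a b, ((b - s) * A' s + s * A' s) = b * (A b - A a) := by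
    have h4 : ∀ s ∈ Ioc a b, (b - s) * A' s + s * A' s = b * A' s := by
      intro s _; ring
    rw [setIntegral_congr_fun measurableSet_Ioc h4, integral_const_mul,
      ← intervalIntegral.integral_of_le hab]
    rw [(hFTC a b ha hab).2]; ring
  rw [intervalIntegral.integral_add hAint htA', hAeq, htA'eq, add_assoc,
    ← integral_add hbsA' hsA', hsum, (hFTC a b ha hab).2]
  ring

lemma key_lower {p a₃ : ℝ} (hp : 2 ≤ p) (ha₃ : 0 < a₃) {A A' : ℝ → ℝ}
    (hFTC : ∀ a b : ℝ, 0 < a → a ≤ b →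
      IntervalIntegrable A' volume a b ∧ A b = A a + ∫ t in a..b, A' t)
    (hcont : ∀ x : ℝ, 0 < x → ContinuousAt A x)
    (hae : ∀ᵐ s : ℝ ∂volume, 0 < s → a₃ * s ^ (p - 2) ≤ A s + s * A' s)
    {a b : ℝ} (ha : 0 < a) (hab : a ≤ b) :
    a₃ * ((b ^ (p - 1) - a ^ (p - 1)) / (p - 1)) ≤ b * A b - a * A a := by
  rw [ftc_id hFTC hcont ha hab]
  have hgcont : ContinuousOn (fun t : ℝ => a₃ * t ^ (p - 2)) (uIcc a b) := by
    intro y hy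
    rw [uIcc_of_le hab] at hy
    exact (continuousAt_const.mul
      (Real.continuousAt_rpow_const y (p - 2) (Or.inl (lt_of_lt_of_le ha hy.1).ne'))).continuousWithinAt
  have hint1 : IntervalIntegrable (fun t : ℝ => a₃ * t ^ (p - 2)) volume a b :=
    hgcont.intervalIntegrable
  have hAcont : ContinuousOn A (uIcc a b) := by
    intro y hy
    rw [uIcc_of_le hab] at hy
    exact (hcont y (lt_of_lt_of_le ha hy.1)).continuousWithinAt
  have hint2 : IntervalIntegrable (fun t => A t + t * A' t) volume a b :=
    hAcont.intervalIntegrable.add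
      (((hFTC a b ha hab).1).continuousOn_mul continuous_id.continuousOn)
  have haer : (fun t : ℝ => a₃ * t ^ (p - 2)) ≤ᵐ[volume.restrict (Icc a b)]
      (fun t => A t + t * A' t) := by
    refine (ae_restrict_of_ae hae).mp ((ae_restrict_mem measurableSet_Icc).mono ?_)
    intro t ht h
    exact h (lt_of_lt_of_le ha ht.1)
  have hmono := intervalIntegral.integral_mono_ae_restrict hab hint1 hint2 haer
  refine le_trans (le_of_eq ?_) hmono
  rw [intervalIntegral.integral_const_mul, integral_rpow (Or.inl (by linarith))]
  have : p - 2 + 1 = p - 1 := by ring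
  rw [this]

end Helpers

open Classical in
/-- The operator density `φ(z) = A(|z|) z`, with `φ(0) = 0`. -/
noncomputable def phiA {N : ℕ} (A : ℝ → ℝ) (z : EuclideanSpace ℝ (Fin N)) :
    EuclideanSpace ℝ (Fin N) :=
  if z = 0 then 0 else A ‖z‖ • z

section Helpers2
open Set

lemma inner_expand {N : ℕ} (A : ℝ → ℝ) (ξ ζ : EuclideanSpace ℝ (Fin N)) (hξ : ξ ≠ 0)
    (hζ : ζ ≠ 0) :
    ⟪phiA A ξ - phiA A ζ, ξ - ζ⟫ =
      A ‖ξ‖ * ‖ξ‖ ^ 2 + A ‖ζ‖ * ‖ζ‖ ^ 2 - (A ‖ξ‖ + A ‖ζ‖) * ⟪ξ, ζ⟫ := by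
  rw [phiA, phiA, if_neg hξ, if_neg hζ, inner_sub_left, inner_sub_right, inner_sub_right,
    real_inner_smul_left, real_inner_smul_left, real_inner_smul_left, real_inner_smul_left,
    real_inner_self_eq_norm_sq, real_inner_self_eq_norm_sq, real_inner_comm ζ ξ]
  ring

lemma main_half {p a₃ : ℝ} (hp : 2 ≤ p) (ha₃ : 0 < a₃) {N : ℕ} {A : ℝ → ℝ}
    (hA0 : ∀ s : ℝ, 0 < s → 0 ≤ A s)
    (hptA : ∀ s : ℝ, 0 < s → a₃ * s ^ (p - 2) ≤ A s)
    (hkey : ∀ a b : ℝ, 0 < a → a ≤ b →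
      a₃ * ((b ^ (p - 1) - a ^ (p - 1)) / (p - 1)) ≤ b * A b - a * A a)
    (ξ ζ : EuclideanSpace ℝ (Fin N)) (hξ : ξ ≠ 0) (hle : ‖ζ‖ ≤ ‖ξ‖) :
    a₃ * (2 : ℝ) ^ (1 - p) / (p - 1) * ‖ξ - ζ‖ ^ p ≤ ⟪phiA A ξ - phiA A ζ, ξ - ζ⟫ := by
  have hp1 : (1 : ℝ) ≤ p - 1 := by linarith
  have hq0 : (0 : ℝ) < p - 1 := by linarith
  set b := ‖ξ‖ with hbdef
  have hb : 0 < b := norm_pos_iff.mpr hξ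
  have hC1le : a₃ * (2 : ℝ) ^ (1 - p) / (p - 1) ≤ a₃ := by
    have h1 : (2 : ℝ) ^ (1 - p) ≤ 1 :=
      Real.rpow_le_one_of_one_le_of_nonpos (by norm_num) (by linarith)
    calc a₃ * (2 : ℝ) ^ (1 - p) / (p - 1) ≤ a₃ * 1 / 1 := by
          apply div_le_div₀ (by positivity) _ one_pos hp1
          exact mul_le_mul_of_nonneg_left h1 ha₃.le
      _ = a₃ := by ring
  by_cases hξζ : ξ = ζ
  · rw [hξζ, sub_self, norm_zero, Real.zero_rpow (by linarith : p ≠ 0)]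
    simp
  have hd : 0 < ‖ξ - ζ‖ := norm_pos_iff.mpr (sub_ne_zero.mpr hξζ)
  set d := ‖ξ - ζ‖ with hddef
  have hdp : d ^ p = d ^ (p - 2) * d ^ (2 : ℕ) := by
    rw [← Real.rpow_natCast d 2, ← Real.rpow_add hd]; norm_num
  by_cases hζ0 : ζ = 0
  · subst hζ0
    rw [phiA, phiA, if_neg hξ, if_pos rfl, sub_zero, sub_zero, real_inner_smul_left,
      real_inner_self_eq_norm_sq]
    have hbp : b ^ p = b ^ (p - 2) * b ^ (2 : ℕ) := by
      rw [← Real.rpow_natCast b 2, ← Real.rpow_add hb]; norm_num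
    have h2 : a₃ * b ^ (p - 2) * b ^ (2 : ℕ) ≤ A b * b ^ (2 : ℕ) :=
      mul_le_mul_of_nonneg_right (hptA b hb) (by positivity)
    calc a₃ * (2 : ℝ) ^ (1 - p) / (p - 1) * d ^ p ≤ a₃ * d ^ p :=
          mul_le_mul_of_nonneg_right hC1le (Real.rpow_nonneg hd.le p)
      _ = a₃ * b ^ p := by rw [hddef, sub_zero]
      _ ≤ A b * b ^ (2 : ℕ) := by rw [hbp, ← mul_assoc]; exact h2
      _ = A ‖ξ‖ * ‖ξ‖ ^ 2 := rfl
  · set a := ‖ζ‖ with hadef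
    have ha : 0 < a := norm_pos_iff.mpr hζ0
    have hinner := inner_expand A ξ ζ hξ hζ0
    set I := (⟪ξ, ζ⟫ : ℝ) with hIdef
    have hI : I ≤ b * a := by
      calc I ≤ ‖ξ‖ * ‖ζ‖ := real_inner_le_norm ξ ζ
        _ = b * a := rfl
    have hE : 0 ≤ b * a - I := by linarith
    have hd2 : d ^ (2 : ℕ) = (b - a) ^ 2 + 2 * (b * a - I) := by
      have := norm_sub_sq_real ξ ζ
      rw [hddef]; rw [this]; ring
    have hd2b : d ≤ 2 * b := by
      calc d ≤ ‖ξ‖ + ‖ζ‖ := norm_sub_le ξ ζ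
        _ ≤ 2 * b := by rw [← hbdef, ← hadef]; linarith
    have hB0 : (0 : ℝ) < b ^ (p - 2) := Real.rpow_pos_of_pos hb _
    have hs2 : b ^ (p - 2) * (b - a) ≤ b ^ (p - 1) - a ^ (p - 1) := by
      have e1 : b ^ (p - 1) = b ^ (p - 2) * b := by
        rw [show p - 1 = p - 2 + 1 by ring, Real.rpow_add_one hb.ne']
      have e2 : a ^ (p - 1) = a ^ (p - 2) * a := by
        rw [show p - 1 = p - 2 + 1 by ring, Real.rpow_add_one ha.ne']
      have e3 : a ^ (p - 2) ≤ b ^ (p - 2) :=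
        Real.rpow_le_rpow ha.le hle (by linarith)
      nlinarith [mul_le_mul_of_nonneg_right e3 ha.le]
    have hs1 := hkey a b ha hle
    have hba : (0 : ℝ) ≤ b - a := by linarith
    have t1 : a₃ * (b ^ (p - 2) * (b - a) ^ 2) / (p - 1) ≤ (b * A b - a * A a) * (b - a) := by
      have h5 : a₃ * (b ^ (p - 2) * (b - a)) / (p - 1) ≤ b * A b - a * A a := by
        refine le_trans ?_ hs1
        rw [mul_div_assoc]
        gcongr
      calc a₃ * (b ^ (p - 2) * (b - a) ^ 2) / (p - 1)
          = a₃ * (b ^ (p - 2) * (b - a)) / (p - 1) * (b - a) := by ring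
        _ ≤ (b * A b - a * A a) * (b - a) := mul_le_mul_of_nonneg_right h5 hba
    have t2 : a₃ * b ^ (p - 2) * (b * a - I) ≤ (A b + A a) * (b * a - I) := by
      have hAb : a₃ * b ^ (p - 2) ≤ A b + A a :=
        le_trans (hptA b hb) (by linarith [hA0 a ha])
      exact mul_le_mul_of_nonneg_right hAb hE
    have hsum : a₃ * (b ^ (p - 2) * (b - a) ^ 2) / (p - 1) + a₃ * b ^ (p - 2) * (b * a - I)
        ≤ ⟪phiA A ξ - phiA A ζ, ξ - ζ⟫ := by
      rw [hinner]
      have hiden : A b * b ^ 2 + A a * a ^ 2 - (A b + A a) * I =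
          (b * A b - a * A a) * (b - a) + (A b + A a) * (b * a - I) := by ring
      rw [hiden]
      exact add_le_add t1 t2
    have hfrac : ((b - a) ^ 2 + 2 * (b * a - I)) / (2 * (p - 1))
        ≤ (b - a) ^ 2 / (p - 1) + (b * a - I) := by
      rw [div_le_iff₀ (by positivity)]
      have hX : (b - a) ^ 2 / (p - 1) * (p - 1) = (b - a) ^ 2 :=
        div_mul_cancel₀ _ hq0.ne'
      nlinarith [hX, mul_nonneg hE (by linarith : (0:ℝ) ≤ p - 2), sq_nonneg (b - a)]
    have stepA : a₃ * b ^ (p - 2) * ((b - a) ^ 2 + 2 * (b * a - I)) / (2 * (p - 1))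
        ≤ a₃ * (b ^ (p - 2) * (b - a) ^ 2) / (p - 1) + a₃ * b ^ (p - 2) * (b * a - I) := by
      calc a₃ * b ^ (p - 2) * ((b - a) ^ 2 + 2 * (b * a - I)) / (2 * (p - 1))
          = a₃ * b ^ (p - 2) * (((b - a) ^ 2 + 2 * (b * a - I)) / (2 * (p - 1))) := by ring
        _ ≤ a₃ * b ^ (p - 2) * ((b - a) ^ 2 / (p - 1) + (b * a - I)) :=
            mul_le_mul_of_nonneg_left hfrac (by positivity)
        _ = a₃ * (b ^ (p - 2) * (b - a) ^ 2) / (p - 1) + a₃ * b ^ (p - 2) * (b * a - I) := by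
            ring
    have hBd : (2 : ℝ) ^ (2 - p) * d ^ (p - 2) ≤ b ^ (p - 2) := by
      have h7 : (d / 2) ^ (p - 2) ≤ b ^ (p - 2) :=
        Real.rpow_le_rpow (by positivity) (by linarith) (by linarith)
      have h8 : (d / 2) ^ (p - 2) = d ^ (p - 2) / (2 : ℝ) ^ (p - 2) :=
        Real.div_rpow hd.le (by norm_num : (0:ℝ) ≤ 2) (p - 2)
      have h9 : (2 : ℝ) ^ (2 - p) = ((2 : ℝ) ^ (p - 2))⁻¹ := by
        rw [show (2 : ℝ) - p = -(p - 2) by ring, Real.rpow_neg (by norm_num)]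
      calc (2 : ℝ) ^ (2 - p) * d ^ (p - 2) = d ^ (p - 2) / (2 : ℝ) ^ (p - 2) := by
            rw [h9]; ring
        _ = (d / 2) ^ (p - 2) := h8.symm
        _ ≤ b ^ (p - 2) := h7
    have h10 : (2 : ℝ) ^ (2 - p) = 2 * (2 : ℝ) ^ (1 - p) := by
      rw [show (2 : ℝ) - p = 1 + (1 - p) by ring, Real.rpow_add (by norm_num), Real.rpow_one]
    calc a₃ * (2 : ℝ) ^ (1 - p) / (p - 1) * d ^ p
        = a₃ * ((2 : ℝ) ^ (2 - p) * d ^ (p - 2)) * d ^ (2 : ℕ) / (2 * (p - 1)) := by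
          rw [hdp, h10]
          have hne : p - 1 ≠ 0 := hq0.ne'
          field_simp
      _ ≤ a₃ * b ^ (p - 2) * d ^ (2 : ℕ) / (2 * (p - 1)) := by gcongr
      _ = a₃ * b ^ (p - 2) * ((b - a) ^ 2 + 2 * (b * a - I)) / (2 * (p - 1)) := by rw [hd2]
      _ ≤ a₃ * (b ^ (p - 2) * (b - a) ^ 2) / (p - 1) + a₃ * b ^ (p - 2) * (b * a - I) := stepA
      _ ≤ ⟪phiA A ξ - phiA A ζ, ξ - ζ⟫ := hsum

end Helpers2

/-- Degenerate case (`p ≥ 2`) of Lemma 4.1(i): strong monotonicity of `z ↦ A(|z|)z` for a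
locally absolutely continuous `A : (0,∞) → [0,∞)` satisfying the ellipticity conditions
`A(s) ≥ a₃ s^(p-2)` and `A(s) + s A'(s) ≥ a₃ s^(p-2)` a.e. on `(0,∞)`.  Local absolute
continuity is encoded through the fundamental theorem of calculus: `A'` is locally integrable
on `(0,∞)` and `A(b) = A(a) + ∫_a^b A'` whenever `0 < a ≤ b`.  The constant `C₁` depends only
on `p` and `a₃`. -/
theorem degenerate_strong_monotonicity (p a₃ : ℝ) (hp : 2 ≤ p) (ha₃ : 0 < a₃) :
    ∃ C₁ > 0, ∀ N : ℕ, 1 ≤ N → ∀ A A' : ℝ → ℝ,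
      (∀ s : ℝ, 0 < s → 0 ≤ A s) →
      (∀ a b : ℝ, 0 < a → a ≤ b →
        IntervalIntegrable A' volume a b ∧ A b = A a + ∫ t in a..b, A' t) →
      (∀ᵐ (s : ℝ) ∂volume, 0 < s → a₃ * s ^ (p - 2) ≤ A s ∧ a₃ * s ^ (p - 2) ≤ A s + s * A' s) →
      ∀ ξ ζ : EuclideanSpace ℝ (Fin N), ¬(ξ = 0 ∧ ζ = 0) →
        C₁ * ‖ξ - ζ‖ ^ p ≤ ⟪phiA A ξ - phiA A ζ, ξ - ζ⟫ := by
  refine ⟨a₃ * (2 : ℝ) ^ (1 - p) / (p - 1),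
    div_pos (mul_pos ha₃ (Real.rpow_pos_of_pos two_pos _)) (by linarith), ?_⟩
  intro N _ A A' hA0 hFTC hae ξ ζ hne
  have hcont : ∀ x : ℝ, 0 < x → ContinuousAt A x := fun x hx => contA hFTC hx
  have hae1 : ∀ᵐ s : ℝ ∂volume, 0 < s → a₃ * s ^ (p - 2) ≤ A s :=
    hae.mono fun s h hs => (h hs).1
  have hae2 : ∀ᵐ s : ℝ ∂volume, 0 < s → a₃ * s ^ (p - 2) ≤ A s + s * A' s :=
    hae.mono fun s h hs => (h hs).2
  have hptA := ptwise hcont hae1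
  have hkey : ∀ a b : ℝ, 0 < a → a ≤ b →
      a₃ * ((b ^ (p - 1) - a ^ (p - 1)) / (p - 1)) ≤ b * A b - a * A a :=
    fun a b ha hab => key_lower hp ha₃ hFTC hcont hae2 ha hab
  rcases le_total ‖ζ‖ ‖ξ‖ with hle | hle
  · have hξ : ξ ≠ 0 := by
      intro h
      apply hne
      refine ⟨h, ?_⟩
      rw [h, norm_zero] at hle
      exact norm_le_zero_iff.mp hle
    exact main_half hp ha₃ hA0 hptA hkey ξ ζ hξ hle
  · have hζ : ζ ≠ 0 := by
      intro h
      apply hne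
      refine ⟨?_, h⟩
      rw [h, norm_zero] at hle
      exact norm_le_zero_iff.mp hle
    have h1 : (⟪phiA A ξ - phiA A ζ, ξ - ζ⟫ : ℝ) = ⟪phiA A ζ - phiA A ξ, ζ - ξ⟫ := by
      rw [← neg_sub (phiA A ζ), ← neg_sub ζ, inner_neg_neg]
    rw [h1, norm_sub_rev]
    exact main_half hp ha₃ hA0 hptA hkey ζ ξ hζ hle
end

section
/- Let N ≥ 1, 1 < p < 2, a₃ > 0, and let A : (0,∞) → [0,∞) be locally absolutely continuous and satisfy, for almost every s > 0, min{A(s), A(s) + s·A'(s)} ≥ a₃ min{1, s^(p-2)}. Define φ : ℝ^N → ℝ^N by φ(z) = A(|z|)z for z ≠ 0 and φ(0) = 0. Then there exists a constant C₂ > 0, depending only on p and a₃, such that for all ξ, ζ ∈ ℝ^N with (ξ,ζ) ≠ (0,0): (φ(ξ) − φ(ζ)) · (ξ − ζ) ≥ C₂ |ξ − ζ|² · min{1, (|ξ| + |ζ|)^(p-2)}. (Singular case of Lemma 4.1(ii).) -/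
open MeasureTheory RealInnerProductSpace

/-- Purely algebraic core inequality. -/
lemma sing_core (a b c t r w : ℝ) (ht : 0 < t) (hr : 0 < r) (hrt : r ≤ t) (hc : 0 ≤ c)
    (hE1 : c * (t - r) ≤ a * t - b * r) (hE2a : c * t ≤ a * t) (hE2b : c * r ≤ b * r)
    (hw1 : -(t * r) ≤ w) (hw2 : w ≤ t * r) :
    c * (t ^ 2 - 2 * w + r ^ 2) ≤ a * t ^ 2 + b * r ^ 2 - (a + b) * w := by
  rcases le_total (a + b) (2 * c) with h | h
  · have h1 : 0 ≤ (2 * c - (a + b)) * (w + t * r) := mul_nonneg (by linarith) (by linarith)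
    have h3 : 0 ≤ (t + r) * (a * t + b * r - c * (t + r)) :=
      mul_nonneg (by linarith) (by nlinarith)
    nlinarith [h1, h3]
  · have h1 : 0 ≤ ((a + b) - 2 * c) * (t * r - w) := mul_nonneg (by linarith) (by linarith)
    have h3 : 0 ≤ (t - r) * (a * t - b * r - c * (t - r)) :=
      mul_nonneg (by linarith) (by linarith)
    nlinarith [h1, h3]

/-- Fubini swap for the triangle. -/
lemma sing_swap (A' : ℝ → ℝ) {r t : ℝ} (hrt : r ≤ t)
    (hA' : IntegrableOn A' (Set.Ioc r t)) :
    ∫ u in Set.Ioc r t, (∫ s in Set.Ioc r u, A' s) = ∫ s in Set.Ioc r t, (t - s) * A' s := by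
  have hfin : IsFiniteMeasure (volume.restrict (Set.Ioc r t)) := by
    constructor
    rw [Measure.restrict_apply_univ, Real.volume_Ioc]
    exact ENNReal.ofReal_lt_top
  have hintbase : Integrable (fun z : ℝ × ℝ => A' z.2)
      ((volume.restrict (Set.Ioc r t)).prod (volume.restrict (Set.Ioc r t))) := by
    have h1 : Integrable (fun _ : ℝ => (1 : ℝ)) (volume.restrict (Set.Ioc r t)) :=
      integrable_const 1
    have h2 : Integrable A' (volume.restrict (Set.Ioc r t)) := hA'
    simpa using h1.mul_prod h2
  have hmeas : MeasurableSet {z : ℝ × ℝ | z.2 ≤ z.1} :=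
    measurableSet_le measurable_snd measurable_fst
  have hf : Integrable (Function.uncurry fun u s => Set.indicator (Set.Iic u) A' s)
      ((volume.restrict (Set.Ioc r t)).prod (volume.restrict (Set.Ioc r t))) := by
    have he : (Function.uncurry fun u s => Set.indicator (Set.Iic u) A' s)
        = Set.indicator {z : ℝ × ℝ | z.2 ≤ z.1} (fun z => A' z.2) := by
      funext z
      by_cases h : z.2 ≤ z.1 <;>
        simp [Function.uncurry, Set.indicator_apply, h]
    rw [he]
    exact hintbase.indicator hmeas
  calc ∫ u in Set.Ioc r t, (∫ s in Set.Ioc r u, A' s)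
      = ∫ u in Set.Ioc r t, (∫ s in Set.Ioc r t, Set.indicator (Set.Iic u) A' s) := by
        apply setIntegral_congr_fun measurableSet_Ioc
        intro u hu
        show (∫ s in Set.Ioc r u, A' s)
            = ∫ s in Set.Ioc r t, Set.indicator (Set.Iic u) A' s
        rw [setIntegral_indicator measurableSet_Iic, Set.Ioc_inter_Iic, min_eq_right hu.2]
    _ = ∫ s in Set.Ioc r t, (∫ u in Set.Ioc r t, Set.indicator (Set.Iic u) A' s) :=
        MeasureTheory.integral_integral_swap hf
    _ = ∫ s in Set.Ioc r t, (t - s) * A' s := by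
        apply setIntegral_congr_fun measurableSet_Ioc
        intro s hs
        show (∫ u in Set.Ioc r t, Set.indicator (Set.Iic u) A' s) = (t - s) * A' s
        have hfun : (fun u => Set.indicator (Set.Iic u) A' s)
            = Set.indicator (Set.Ici s) (fun _ => A' s) := by
          funext u
          by_cases h : s ≤ u <;> simp [Set.indicator_apply, h]
        rw [hfun, setIntegral_indicator measurableSet_Ici, setIntegral_const]
        have hset : Set.Ioc r t ∩ Set.Ici s = Set.Icc s t := by
          ext u
          simp only [Set.mem_inter_iff, Set.mem_Ioc, Set.mem_Ici, Set.mem_Icc]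
          exact ⟨fun h => ⟨h.2, h.1.2⟩, fun h => ⟨⟨lt_of_lt_of_le hs.1 h.1, h.2⟩, h.1⟩⟩
        rw [hset, measureReal_def, Real.volume_Icc, ENNReal.toReal_ofReal (by linarith [hs.2] : (0:ℝ) ≤ t - s)]
        simp [smul_eq_mul]

/-- Continuity of `A` at positive points. -/
lemma sing_contA (A A' : ℝ → ℝ)
    (hFTC : ∀ a b : ℝ, 0 < a → a ≤ b →
      IntervalIntegrable A' volume a b ∧ A b = A a + ∫ t in a..b, A' t)
    {x : ℝ} (hx : 0 < x) : ContinuousAt A x := by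
  have ha : 0 < x / 2 := by linarith
  have hab : x / 2 ≤ x + 1 := by linarith
  have hint : IntervalIntegrable A' volume (x / 2) (x + 1) := (hFTC _ _ ha hab).1
  have hcont : ContinuousOn (fun y => A (x / 2) + ∫ s in (x / 2)..y, A' s)
      (Set.uIcc (x / 2) (x + 1)) :=
    continuousOn_const.add
      (intervalIntegral.continuousOn_primitive_interval' hint Set.left_mem_uIcc)
  have huicc : Set.uIcc (x / 2) (x + 1) = Set.Icc (x / 2) (x + 1) := Set.uIcc_of_le hab
  rw [huicc] at hcont
  have heq : Set.EqOn A (fun y => A (x / 2) + ∫ s in (x / 2)..y, A' s)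
      (Set.Icc (x / 2) (x + 1)) := fun y hy => (hFTC _ y ha hy.1).2
  have : ContinuousOn A (Set.Icc (x / 2) (x + 1)) := hcont.congr heq
  exact this.continuousAt (Icc_mem_nhds (by linarith) (by linarith))

/-- Key 1-dimensional estimate: `t A(t) - r A(r) ≥ (t - r) a₃ min(1, t^(p-2))`. -/
lemma sing_key (p a₃ : ℝ) (A A' : ℝ → ℝ) (hp2 : p < 2) (ha₃ : 0 < a₃)
    (hFTC : ∀ a b : ℝ, 0 < a → a ≤ b →
      IntervalIntegrable A' volume a b ∧ A b = A a + ∫ t in a..b, A' t)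
    (hell : ∀ᵐ (s : ℝ) ∂volume, 0 < s →
      a₃ * min 1 (s ^ (p - 2)) ≤ min (A s) (A s + s * A' s))
    {r t : ℝ} (hr : 0 < r) (hrt : r ≤ t) :
    (t - r) * (a₃ * min 1 (t ^ (p - 2))) ≤ t * A t - r * A r := by
  have ht : 0 < t := lt_of_lt_of_le hr hrt
  have huicc : Set.uIcc r t = Set.Icc r t := Set.uIcc_of_le hrt
  have hA'int : IntervalIntegrable A' volume r t := (hFTC r t hr hrt).1
  have hA'Ioc : IntegrableOn A' (Set.Ioc r t) :=
    (intervalIntegrable_iff_integrableOn_Ioc_of_le hrt).1 hA'int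
  have hAcont : ContinuousOn A (Set.uIcc r t) := by
    intro y hy
    rw [huicc] at hy
    exact (sing_contA A A' hFTC (lt_of_lt_of_le hr hy.1)).continuousWithinAt
  have hAint : IntervalIntegrable A volume r t := hAcont.intervalIntegrable
  have hidcont : ContinuousOn (fun s : ℝ => s) (Set.uIcc r t) := continuousOn_id
  have hsA'int : IntervalIntegrable (fun s => s * A' s) volume r t :=
    hA'int.continuousOn_mul hidcont
  have htsA'int : IntervalIntegrable (fun s => (t - s) * A' s) volume r t :=
    hA'int.continuousOn_mul (continuousOn_const.sub hidcont)
  have hrpow : ContinuousOn (fun s : ℝ => s ^ (p - 2)) (Set.uIcc r t) := by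
    intro s hs
    rw [huicc] at hs
    exact (Real.continuousAt_rpow_const s (p - 2)
      (Or.inl (ne_of_gt (lt_of_lt_of_le hr hs.1)))).continuousWithinAt
  have hmcont : ContinuousOn (fun s : ℝ => a₃ * min 1 (s ^ (p - 2))) (Set.uIcc r t) :=
    continuousOn_const.mul ((continuous_const.min continuous_id).comp_continuousOn hrpow)
  have hmint : IntervalIntegrable (fun s : ℝ => a₃ * min 1 (s ^ (p - 2))) volume r t :=
    hmcont.intervalIntegrable
  have hA : ∀ u ∈ Set.Icc r t, A u = A r + ∫ s in r..u, A' s :=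
    fun u hu => (hFTC r u hr hu.1).2
  -- integration by parts via Fubini
  have h1 : ∫ u in r..t, (A u - A r) = ∫ s in r..t, (t - s) * A' s := by
    calc ∫ u in r..t, (A u - A r) = ∫ u in Set.Ioc r t, (A u - A r) :=
          intervalIntegral.integral_of_le hrt
      _ = ∫ u in Set.Ioc r t, (∫ s in Set.Ioc r u, A' s) := by
          apply setIntegral_congr_fun measurableSet_Ioc
          intro u hu
          show A u - A r = ∫ s in Set.Ioc r u, A' s
          rw [hA u ⟨hu.1.le, hu.2⟩, intervalIntegral.integral_of_le hu.1.le]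
          ring
      _ = ∫ s in Set.Ioc r t, (t - s) * A' s := sing_swap A' hrt hA'Ioc
      _ = ∫ s in r..t, (t - s) * A' s := (intervalIntegral.integral_of_le hrt).symm
  have e3 : (∫ s in r..t, A' s) = A t - A r := by
    have := (hFTC r t hr hrt).2
    linarith
  have e1 : ∫ s in r..t, (t - s) * A' s
      = t * (A t - A r) - ∫ s in r..t, s * A' s := by
    have : ∫ s in r..t, (t - s) * A' s
        = (∫ s in r..t, t * A' s) - ∫ s in r..t, s * A' s := by
      rw [← intervalIntegral.integral_sub (hA'int.const_mul t) hsA'int]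
      apply intervalIntegral.integral_congr
      intro s _
      ring
    rw [this, intervalIntegral.integral_const_mul, e3]
  have e2 : ∫ u in r..t, (A u - A r) = (∫ u in r..t, A u) - (t - r) * A r := by
    rw [intervalIntegral.integral_sub hAint intervalIntegrable_const,
      intervalIntegral.integral_const, smul_eq_mul]
  have h2 : ∫ s in r..t, (A s + s * A' s) = t * A t - r * A r := by
    rw [intervalIntegral.integral_add hAint hsA'int]
    rw [e2, e1] at h1
    linarith
  have h3 : (∫ s in r..t, a₃ * min 1 (s ^ (p - 2)))
      ≤ ∫ s in r..t, (A s + s * A' s) := by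
    apply intervalIntegral.integral_mono_ae_restrict hrt hmint (hAint.add hsA'int)
    filter_upwards [ae_restrict_of_ae hell, ae_restrict_mem measurableSet_Icc] with s h1' h2'
    have hs : 0 < s := lt_of_lt_of_le hr h2'.1
    exact le_trans (h1' hs) (min_le_right _ _)
  have h4 : (t - r) * (a₃ * min 1 (t ^ (p - 2)))
      ≤ ∫ s in r..t, a₃ * min 1 (s ^ (p - 2)) := by
    have hmono : ∀ s ∈ Set.Icc r t,
        (fun _ : ℝ => a₃ * min 1 (t ^ (p - 2))) s ≤ a₃ * min 1 (s ^ (p - 2)) := by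
      intro s hs
      have hs0 : 0 < s := lt_of_lt_of_le hr hs.1
      have : t ^ (p - 2) ≤ s ^ (p - 2) :=
        Real.rpow_le_rpow_of_nonpos hs0 hs.2 (by linarith)
      exact mul_le_mul_of_nonneg_left (min_le_min le_rfl this) ha₃.le
    have := intervalIntegral.integral_mono_on hrt intervalIntegrable_const hmint hmono
    rwa [intervalIntegral.integral_const, smul_eq_mul] at this
  linarith

/-- Lower bound `A(t) ≥ a₃ min(1, t^(p-2))` (times `t`). -/
lemma sing_glb (p a₃ : ℝ) (A A' : ℝ → ℝ) (hp2 : p < 2) (ha₃ : 0 < a₃)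
    (hA0 : ∀ s : ℝ, 0 < s → 0 ≤ A s)
    (hFTC : ∀ a b : ℝ, 0 < a → a ≤ b →
      IntervalIntegrable A' volume a b ∧ A b = A a + ∫ t in a..b, A' t)
    (hell : ∀ᵐ (s : ℝ) ∂volume, 0 < s →
      a₃ * min 1 (s ^ (p - 2)) ≤ min (A s) (A s + s * A' s))
    {t : ℝ} (ht : 0 < t) :
    t * (a₃ * min 1 (t ^ (p - 2))) ≤ t * A t := by
  set c := a₃ * min 1 (t ^ (p - 2)) with hc
  have hc0 : 0 < c := mul_pos ha₃ (lt_min one_pos (Real.rpow_pos_of_pos ht _))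
  by_contra hcon
  push_neg at hcon
  set r := min (t / 2) ((t * c - t * A t) / (2 * c)) with hrdef
  have hr0 : 0 < r := lt_min (by linarith) (div_pos (by linarith) (by linarith))
  have hrt : r ≤ t := le_trans (min_le_left _ _) (by linarith)
  have hkey := sing_key p a₃ A A' hp2 ha₃ hFTC hell hr0 hrt
  have hAr : 0 ≤ A r := hA0 r hr0
  have hup : (t - r) * c ≤ t * A t := by nlinarith [mul_nonneg hAr hr0.le]
  have h1 : r ≤ (t * c - t * A t) / (2 * c) := min_le_right _ _
  have h3 : r * c ≤ (t * c - t * A t) / 2 := by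
    calc r * c ≤ ((t * c - t * A t) / (2 * c)) * c :=
          mul_le_mul_of_nonneg_right h1 hc0.le
      _ = (t * c - t * A t) / 2 := by field_simp
  nlinarith

/-- Singular case (`1 < p < 2`) of Lemma 4.1(ii): monotonicity estimate for `z ↦ A(|z|)z` for a
locally absolutely continuous `A : (0,∞) → [0,∞)` satisfying the ellipticity condition
`min{A(s), A(s) + s A'(s)} ≥ a₃ min{1, s^(p-2)}` a.e. on `(0,∞)`.  Local absolute
continuity is encoded through the fundamental theorem of calculus: `A'` is locally integrable
on `(0,∞)` and `A(b) = A(a) + ∫_a^b A'` whenever `0 < a ≤ b`.  The constant `C₂` depends only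
on `p` and `a₃`. -/
theorem singular_monotonicity (p a₃ : ℝ) (hp1 : 1 < p) (hp2 : p < 2) (ha₃ : 0 < a₃) :
    ∃ C₂ > 0, ∀ N : ℕ, 1 ≤ N → ∀ A A' : ℝ → ℝ,
      (∀ s : ℝ, 0 < s → 0 ≤ A s) →
      (∀ a b : ℝ, 0 < a → a ≤ b →
        IntervalIntegrable A' volume a b ∧ A b = A a + ∫ t in a..b, A' t) →
      (∀ᵐ (s : ℝ) ∂volume, 0 < s →
        a₃ * min 1 (s ^ (p - 2)) ≤ min (A s) (A s + s * A' s)) →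
      ∀ ξ ζ : EuclideanSpace ℝ (Fin N), ¬(ξ = 0 ∧ ζ = 0) →
        C₂ * ‖ξ - ζ‖ ^ 2 * min 1 ((‖ξ‖ + ‖ζ‖) ^ (p - 2)) ≤ ⟪phiA A ξ - phiA A ζ, ξ - ζ⟫ := by
  refine ⟨a₃, ha₃, ?_⟩
  intro N _ A A' hA0 hFTC hell ξ ζ hnz
  have hphi : ∀ z : EuclideanSpace ℝ (Fin N), z ≠ 0 → phiA A z = A ‖z‖ • z := by
    intro z hz
    simp [phiA, hz]
  have hphi0 : phiA A (0 : EuclideanSpace ℝ (Fin N)) = 0 := by simp [phiA]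
  by_cases hξ : ξ = 0
  · by_cases hζ : ζ = 0
    · exact absurd ⟨hξ, hζ⟩ hnz
    · subst hξ
      have hr : 0 < ‖ζ‖ := norm_pos_iff.2 hζ
      have hg := sing_glb p a₃ A A' hp2 ha₃ hA0 hFTC hell hr
      have e : ⟪phiA A (0 : EuclideanSpace ℝ (Fin N)) - phiA A ζ,
          (0 : EuclideanSpace ℝ (Fin N)) - ζ⟫ = A ‖ζ‖ * ‖ζ‖ ^ 2 := by
        rw [hphi0, hphi ζ hζ, zero_sub, zero_sub, inner_neg_neg,
          real_inner_smul_left, real_inner_self_eq_norm_sq]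
      rw [e]
      simp only [zero_sub, norm_neg, norm_zero, zero_add]
      nlinarith [hg, sq_nonneg ‖ζ‖]
  · by_cases hζ : ζ = 0
    · subst hζ
      have ht : 0 < ‖ξ‖ := norm_pos_iff.2 hξ
      have hg := sing_glb p a₃ A A' hp2 ha₃ hA0 hFTC hell ht
      have e : ⟪phiA A ξ - phiA A (0 : EuclideanSpace ℝ (Fin N)),
          ξ - (0 : EuclideanSpace ℝ (Fin N))⟫ = A ‖ξ‖ * ‖ξ‖ ^ 2 := by
        rw [hphi0, hphi ξ hξ, sub_zero, sub_zero,
          real_inner_smul_left, real_inner_self_eq_norm_sq]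
      rw [e]
      simp only [sub_zero, norm_zero, add_zero]
      nlinarith [hg, sq_nonneg ‖ξ‖]
    · -- both nonzero
      have ht : 0 < ‖ξ‖ := norm_pos_iff.2 hξ
      have hr : 0 < ‖ζ‖ := norm_pos_iff.2 hζ
      set t := ‖ξ‖
      set r := ‖ζ‖
      set w := (⟪ξ, ζ⟫ : ℝ) with hwdef
      have hI : ⟪phiA A ξ - phiA A ζ, ξ - ζ⟫
          = A t * t ^ 2 + A r * r ^ 2 - (A t + A r) * w := by
        rw [hphi ξ hξ, hphi ζ hζ, inner_sub_left, inner_sub_right, inner_sub_right,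
          real_inner_smul_left, real_inner_smul_left, real_inner_smul_left,
          real_inner_smul_left, real_inner_self_eq_norm_sq, real_inner_self_eq_norm_sq]
        rw [hwdef]
        simp only [real_inner_comm ξ ζ]
        ring
      have hns : ‖ξ - ζ‖ ^ 2 = t ^ 2 - 2 * w + r ^ 2 := norm_sub_sq_real ξ ζ
      have hw : |w| ≤ t * r := abs_real_inner_le_norm ξ ζ
      have hw1 : -(t * r) ≤ w := neg_le_of_abs_le hw
      have hw2 : w ≤ t * r := le_of_abs_le hw
      rw [hI, hns]
      have hM0 : (0 : ℝ) ≤ a₃ * min 1 ((t + r) ^ (p - 2)) :=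
        mul_nonneg ha₃.le (le_min zero_le_one (Real.rpow_pos_of_pos (by linarith) _).le)
      have hE2a : (a₃ * min 1 ((t + r) ^ (p - 2))) * t ≤ A t * t := by
        have hg := sing_glb p a₃ A A' hp2 ha₃ hA0 hFTC hell ht
        have hmono : min 1 ((t + r) ^ (p - 2)) ≤ min 1 (t ^ (p - 2)) :=
          min_le_min le_rfl (Real.rpow_le_rpow_of_nonpos ht (by linarith) (by linarith))
        nlinarith [mul_le_mul_of_nonneg_left hmono ha₃.le]
      have hE2b : (a₃ * min 1 ((t + r) ^ (p - 2))) * r ≤ A r * r := by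
        have hg := sing_glb p a₃ A A' hp2 ha₃ hA0 hFTC hell hr
        have hmono : min 1 ((t + r) ^ (p - 2)) ≤ min 1 (r ^ (p - 2)) :=
          min_le_min le_rfl (Real.rpow_le_rpow_of_nonpos hr (by linarith) (by linarith))
        nlinarith [mul_le_mul_of_nonneg_left hmono ha₃.le]
      rcases le_total r t with hrt | htr
      · have hkey := sing_key p a₃ A A' hp2 ha₃ hFTC hell hr hrt
        have hmono : min 1 ((t + r) ^ (p - 2)) ≤ min 1 (t ^ (p - 2)) :=
          min_le_min le_rfl (Real.rpow_le_rpow_of_nonpos ht (by linarith) (by linarith))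
        have hE1 : (a₃ * min 1 ((t + r) ^ (p - 2))) * (t - r) ≤ A t * t - A r * r := by
          nlinarith [mul_le_mul_of_nonneg_left hmono ha₃.le,
            mul_le_mul_of_nonneg_left
              (mul_le_mul_of_nonneg_left hmono ha₃.le) (sub_nonneg.2 hrt)]
        have H := sing_core (A t) (A r) (a₃ * min 1 ((t + r) ^ (p - 2))) t r w
          ht hr hrt hM0 hE1 hE2a hE2b hw1 hw2
        calc a₃ * (t ^ 2 - 2 * w + r ^ 2) * min 1 ((t + r) ^ (p - 2))
            = (a₃ * min 1 ((t + r) ^ (p - 2))) * (t ^ 2 - 2 * w + r ^ 2) := by ring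
          _ ≤ A t * t ^ 2 + A r * r ^ 2 - (A t + A r) * w := H
      · have hkey := sing_key p a₃ A A' hp2 ha₃ hFTC hell ht htr
        have hmono : min 1 ((t + r) ^ (p - 2)) ≤ min 1 (r ^ (p - 2)) :=
          min_le_min le_rfl (Real.rpow_le_rpow_of_nonpos hr (by linarith) (by linarith))
        have hE1 : (a₃ * min 1 ((t + r) ^ (p - 2))) * (r - t) ≤ A r * r - A t * t := by
          nlinarith [mul_le_mul_of_nonneg_left hmono ha₃.le,
            mul_le_mul_of_nonneg_left
              (mul_le_mul_of_nonneg_left hmono ha₃.le) (sub_nonneg.2 htr)]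
        have H := sing_core (A r) (A t) (a₃ * min 1 ((t + r) ^ (p - 2))) r t w
          hr ht htr hM0 hE1 hE2b hE2a (by linarith [hw1]) (by linarith [hw2])
        calc a₃ * (t ^ 2 - 2 * w + r ^ 2) * min 1 ((t + r) ^ (p - 2))
            = (a₃ * min 1 ((t + r) ^ (p - 2))) * (r ^ 2 - 2 * w + t ^ 2) := by ring
          _ ≤ A r * r ^ 2 + A t * t ^ 2 - (A r + A t) * w := H
          _ = A t * t ^ 2 + A r * r ^ 2 - (A t + A r) * w := by ring
end

section
/- Let N ≥ 1, p ≥ 2, a₃ > 0, and let A : (0,∞) → [0,∞) be locally absolutely continuous and satisfy, for almost every s > 0, A(s) ≥ a₃ s^(p-2) and A(s) + s·A'(s) ≥ a₃ s^(p-2). Define φ : ℝ^N → ℝ^N by φ(z) = A(|z|)z for z ≠ 0 and φ(0) = 0. Then for all ξ, ζ ∈ ℝ^N: (φ(ξ) − φ(ζ)) · (ξ − ζ) ≥ a₃ |ξ − ζ|² · ∫₀¹ |ζ + t(ξ − ζ)|^(p-2) dt. -/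
set_option maxHeartbeats 1000000

open MeasureTheory RealInnerProductSpace

section Helpers
open Set intervalIntegral


/-- Triangle FTC: derivative of `M x = x * P x - ∫ τ f τ` is `P x` everywhere. -/
lemma triangle_hasDerivAt (f : ℝ → ℝ) (hf : Integrable f) (a x : ℝ) :
    HasDerivAt (fun y => y * (∫ τ in a..y, f τ) - ∫ τ in a..y, τ * f τ)
      (∫ τ in a..x, f τ) x := by
  have hint : ∀ c d : ℝ, IntervalIntegrable f volume c d := fun c d => hf.intervalIntegrable
  have hintτ : ∀ c d : ℝ, IntervalIntegrable (fun τ => τ * f τ) volume c d := fun c d =>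
    (hint c d).continuousOn_mul continuousOn_id
  have habs : ∀ c d : ℝ, IntervalIntegrable (fun τ => |f τ|) volume c d := fun c d =>
    hf.abs.intervalIntegrable
  rw [hasDerivAt_iff_isLittleO]
  have key : ∀ y : ℝ, (y * (∫ τ in a..y, f τ) - ∫ τ in a..y, τ * f τ) -
      (x * (∫ τ in a..x, f τ) - ∫ τ in a..x, τ * f τ) - (y - x) * (∫ τ in a..x, f τ)
      = ∫ τ in x..y, (y - τ) * f τ := by
    intro y
    have h1 : (∫ τ in a..y, f τ) - (∫ τ in a..x, f τ) = ∫ τ in x..y, f τ :=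
      integral_interval_sub_left (hint a y) (hint a x)
    have h2 : (∫ τ in a..y, τ * f τ) - (∫ τ in a..x, τ * f τ) = ∫ τ in x..y, τ * f τ :=
      integral_interval_sub_left (hintτ a y) (hintτ a x)
    have h3 : ∫ τ in x..y, (y - τ) * f τ = y * (∫ τ in x..y, f τ) - ∫ τ in x..y, τ * f τ := by
      rw [← intervalIntegral.integral_const_mul, ← intervalIntegral.integral_sub
        ((hint x y).const_mul y) (hintτ x y)]
      congr 1; ext τ; ring
    rw [h3, ← h1, ← h2]; ring
  rw [Asymptotics.isLittleO_iff]
  intro c hc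
  have hcont : ContinuousAt (fun y => abs (∫ τ in x..y, |f τ|)) x := by
    have := (intervalIntegral.continuous_primitive habs x).continuousAt (x := x)
    exact this.abs
  have h0 : abs (∫ τ in x..x, |f τ|) = 0 := by simp
  have hev : ∀ᶠ y in nhds x, abs (∫ τ in x..y, |f τ|) < c := by
    have := hcont.tendsto
    rw [h0] at this
    exact this.eventually_lt_const hc
  filter_upwards [hev] with y hy
  simp only [smul_eq_mul, key]
  have hb : ‖∫ τ in x..y, (y - τ) * f τ‖ ≤ |y - x| * abs (∫ τ in x..y, |f τ|) := by
    calc ‖∫ τ in x..y, (y - τ) * f τ‖ ≤ |∫ τ in x..y, ‖(y - τ) * f τ‖| :=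
          intervalIntegral.norm_integral_le_abs_integral_norm
      _ ≤ |y - x| * abs (∫ τ in x..y, |f τ|) := by
          rcases le_total x y with h | h
          · rw [abs_of_nonneg (intervalIntegral.integral_nonneg h (fun τ _ => norm_nonneg _)),
              abs_of_nonneg (intervalIntegral.integral_nonneg h (fun τ _ => abs_nonneg _))]
            rw [← intervalIntegral.integral_const_mul]
            apply intervalIntegral.integral_mono_on h
              (((hint x y).continuousOn_mul (by fun_prop)).norm) ((habs x y).const_mul _)
            intro τ hτ
            simp only [norm_mul, Real.norm_eq_abs]
            have : |y - τ| ≤ |y - x| := by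
              rw [abs_of_nonneg (by linarith [hτ.2] : (0:ℝ) ≤ y - τ),
                abs_of_nonneg (by linarith : (0:ℝ) ≤ y - x)]
              linarith [hτ.1]
            exact mul_le_mul_of_nonneg_right this (abs_nonneg _)
          · rw [intervalIntegral.integral_symm, abs_neg, intervalIntegral.integral_symm y x,
              abs_neg,
              abs_of_nonneg (intervalIntegral.integral_nonneg h (fun τ _ => norm_nonneg _)),
              abs_of_nonneg (intervalIntegral.integral_nonneg h (fun τ _ => abs_nonneg _))]
            rw [← intervalIntegral.integral_const_mul]
            apply intervalIntegral.integral_mono_on h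
              (((hint y x).continuousOn_mul (by fun_prop)).norm) ((habs y x).const_mul _)
            intro τ hτ
            simp only [norm_mul, Real.norm_eq_abs]
            have : |y - τ| ≤ |y - x| := by
              rw [abs_of_nonpos (by linarith [hτ.1] : y - τ ≤ 0),
                abs_of_nonpos (by linarith : y - x ≤ 0)]
              linarith [hτ.2]
            exact mul_le_mul_of_nonneg_right this (abs_nonneg _)
  calc ‖∫ τ in x..y, (y - τ) * f τ‖ ≤ |y - x| * abs (∫ τ in x..y, |f τ|) := hb
    _ ≤ |y - x| * c := mul_le_mul_of_nonneg_left hy.le (abs_nonneg _)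
    _ = c * ‖y - x‖ := by rw [Real.norm_eq_abs]; ring


lemma primitive_mul_id_integral (f : ℝ → ℝ) (hf : Integrable f) (c a b : ℝ) :
    b * (c + ∫ τ in a..b, f τ) - a * c
      = ∫ σ in a..b, ((c + ∫ τ in a..σ, f τ) + σ * f σ) := by
  have hint : ∀ c d : ℝ, IntervalIntegrable f volume c d := fun c d => hf.intervalIntegrable
  have hintτ : ∀ c d : ℝ, IntervalIntegrable (fun τ => τ * f τ) volume c d := fun c d =>
    (hint c d).continuousOn_mul continuousOn_id
  have hP : Continuous fun x => ∫ τ in a..x, f τ := intervalIntegral.continuous_primitive hint a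
  have hftc : ∫ σ in a..b, (∫ τ in a..σ, f τ)
      = (b * (∫ τ in a..b, f τ) - ∫ τ in a..b, τ * f τ)
        - (a * (∫ τ in a..a, f τ) - ∫ τ in a..a, τ * f τ) :=
    intervalIntegral.integral_eq_sub_of_hasDerivAt
      (fun x _ => triangle_hasDerivAt f hf a x) (hP.intervalIntegrable a b)
  have h1 : ∫ σ in a..b, ((c + ∫ τ in a..σ, f τ) + σ * f σ)
      = (∫ σ in a..b, (c + ∫ τ in a..σ, f τ)) + ∫ σ in a..b, σ * f σ := by
    apply intervalIntegral.integral_add _ (hintτ a b)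
    exact ((continuous_const.add hP).intervalIntegrable a b)
  have h2 : ∫ σ in a..b, (c + ∫ τ in a..σ, f τ)
      = (b - a) * c + ∫ σ in a..b, (∫ τ in a..σ, f τ) := by
    rw [intervalIntegral.integral_add (intervalIntegrable_const) (hP.intervalIntegrable a b)]
    simp [mul_comm]
  rw [h1, h2, hftc]
  simp only [intervalIntegral.integral_same]
  ring

section cov
variable (d a b : ℝ)

lemma sqrt_sq_add_pos (ha : 0 < a) : 0 < Real.sqrt (a ^ 2 + d ^ 2) :=
  Real.sqrt_pos.2 (by positivity)

lemma sqrt_sq_add_mono (ha : 0 < a) (hab : a ≤ b) :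
    Real.sqrt (a ^ 2 + d ^ 2) ≤ Real.sqrt (b ^ 2 + d ^ 2) := by
  apply Real.sqrt_le_sqrt
  have : a ^ 2 ≤ b ^ 2 := by nlinarith
  linarith

lemma cov_deriv (σ : ℝ) (hσ : 0 < σ) :
    HasDerivAt (fun σ => Real.sqrt (σ ^ 2 + d ^ 2))
      (σ / Real.sqrt (σ ^ 2 + d ^ 2)) σ := by
  have h1 : HasDerivAt (fun σ : ℝ => σ ^ 2 + d ^ 2) (2 * σ) σ := by
    simpa using (hasDerivAt_pow 2 σ).add_const (d ^ 2)
  have hpos : (0:ℝ) < σ ^ 2 + d ^ 2 := by positivity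
  have h2 := (Real.hasDerivAt_sqrt hpos.ne').comp σ h1
  refine h2.congr_deriv ?_
  have : Real.sqrt (σ ^ 2 + d ^ 2) ≠ 0 := (Real.sqrt_pos.2 hpos).ne'
  ring

lemma cov_inj (ha : 0 < a) : InjOn (fun σ => Real.sqrt (σ ^ 2 + d ^ 2)) (Icc a b) := by
  intro x hx y hy hxy
  have hx0 : 0 < x := lt_of_lt_of_le ha hx.1
  have hy0 : 0 < y := lt_of_lt_of_le ha hy.1
  have h1 : x ^ 2 + d ^ 2 = y ^ 2 + d ^ 2 := by
    have := congrArg (fun t => t ^ 2) hxy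
    simpa [Real.sq_sqrt (by positivity : (0:ℝ) ≤ x ^ 2 + d ^ 2),
      Real.sq_sqrt (by positivity : (0:ℝ) ≤ y ^ 2 + d ^ 2)] using this
  have h2 : x ^ 2 = y ^ 2 := by linarith
  nlinarith

lemma cov_image (ha : 0 < a) (hab : a ≤ b) :
    (fun σ => Real.sqrt (σ ^ 2 + d ^ 2)) '' (Icc a b)
      = Icc (Real.sqrt (a ^ 2 + d ^ 2)) (Real.sqrt (b ^ 2 + d ^ 2)) := by
  have hcont : ContinuousOn (fun σ => Real.sqrt (σ ^ 2 + d ^ 2)) (Icc a b) :=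
    (Real.continuous_sqrt.comp (by continuity)).continuousOn
  apply Subset.antisymm
  · rintro _ ⟨x, hx, rfl⟩
    exact ⟨sqrt_sq_add_mono d a x (by exact ha) hx.1,
      sqrt_sq_add_mono d x b (lt_of_lt_of_le ha hx.1) hx.2⟩
  · exact intermediate_value_Icc hab hcont

lemma cov_integral (ha : 0 < a) (hab : a ≤ b) (g : ℝ → ℝ) :
    ∫ s in Icc (Real.sqrt (a ^ 2 + d ^ 2)) (Real.sqrt (b ^ 2 + d ^ 2)), g s
      = ∫ σ in Icc a b, (σ / Real.sqrt (σ ^ 2 + d ^ 2)) * g (Real.sqrt (σ ^ 2 + d ^ 2)) := by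
  rw [← cov_image d a b ha hab,
    integral_image_eq_integral_abs_deriv_smul measurableSet_Icc
      (fun σ hσ => (cov_deriv d σ (lt_of_lt_of_le ha hσ.1)).hasDerivWithinAt)
      (cov_inj d a b ha) g]
  apply setIntegral_congr_fun measurableSet_Icc
  intro σ hσ
  have hσ0 : 0 < σ := lt_of_lt_of_le ha hσ.1
  have := sqrt_sq_add_pos d σ hσ0
  simp only [smul_eq_mul, abs_of_nonneg (div_nonneg hσ0.le this.le)]

lemma cov_integrable (ha : 0 < a) (hab : a ≤ b) (g : ℝ → ℝ) :
    IntegrableOn g (Icc (Real.sqrt (a ^ 2 + d ^ 2)) (Real.sqrt (b ^ 2 + d ^ 2)))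
      ↔ IntegrableOn
        (fun σ => (σ / Real.sqrt (σ ^ 2 + d ^ 2)) * g (Real.sqrt (σ ^ 2 + d ^ 2))) (Icc a b) := by
  rw [← cov_image d a b ha hab,
    integrableOn_image_iff_integrableOn_abs_deriv_smul measurableSet_Icc
      (fun σ hσ => (cov_deriv d σ (lt_of_lt_of_le ha hσ.1)).hasDerivWithinAt)
      (cov_inj d a b ha) g]
  apply integrableOn_congr_fun _ measurableSet_Icc
  intro σ hσ
  have hσ0 : 0 < σ := lt_of_lt_of_le ha hσ.1
  have := sqrt_sq_add_pos d σ hσ0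
  simp only [smul_eq_mul, abs_of_nonneg (div_nonneg hσ0.le this.le)]

end cov


lemma key_lemma (p a₃ : ℝ) (hp : 2 ≤ p) (ha₃ : 0 < a₃) (A A' : ℝ → ℝ)
    (hA0 : ∀ s : ℝ, 0 < s → 0 ≤ A s)
    (hAC : ∀ a b : ℝ, 0 < a → a ≤ b →
      IntervalIntegrable A' volume a b ∧ A b = A a + ∫ t in a..b, A' t)
    (hell : ∀ᵐ (s : ℝ) ∂volume, 0 < s →
      a₃ * s ^ (p - 2) ≤ A s ∧ a₃ * s ^ (p - 2) ≤ A s + s * A' s)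
    (d w₀ w₁ : ℝ) (hd : 0 ≤ d) (h0 : 0 < w₀) (h01 : w₀ ≤ w₁) :
    a₃ * ∫ σ in w₀..w₁, Real.sqrt (σ ^ 2 + d ^ 2) ^ (p - 2)
      ≤ w₁ * A (Real.sqrt (w₁ ^ 2 + d ^ 2)) - w₀ * A (Real.sqrt (w₀ ^ 2 + d ^ 2)) := by
  set u : ℝ → ℝ := fun σ => Real.sqrt (σ ^ 2 + d ^ 2) with hu
  set s₀ := u w₀ with hs₀def
  set s₁ := u w₁ with hs₁def
  have hs₀ : 0 < s₀ := sqrt_sq_add_pos d w₀ h0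
  have hs01 : s₀ ≤ s₁ := sqrt_sq_add_mono d w₀ w₁ h0 h01
  have hds₀ : d < s₀ := by
    have h1 : d = Real.sqrt (d ^ 2) := by rw [Real.sqrt_sq hd]
    rw [hs₀def, hu, h1]
    exact Real.sqrt_lt_sqrt (by positivity) (by nlinarith)
  have hupos : ∀ σ : ℝ, 0 < σ → 0 < u σ := fun σ hσ => sqrt_sq_add_pos d σ hσ
  have husq : ∀ σ : ℝ, (u σ) ^ 2 = σ ^ 2 + d ^ 2 := fun σ =>
    Real.sq_sqrt (by positivity)
  have husub : ∀ σ : ℝ, 0 ≤ σ → Real.sqrt ((u σ) ^ 2 - d ^ 2) = σ := by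
    intro σ hσ
    rw [husq]; rw [show σ ^ 2 + d ^ 2 - d ^ 2 = σ ^ 2 by ring, Real.sqrt_sq hσ]
  -- integrability of A' on [s₀, s₁]
  have hA'i : IntegrableOn A' (Icc s₀ s₁) :=
    (intervalIntegrable_iff_integrableOn_Icc_of_le hs01).1 (hAC s₀ s₁ hs₀ hs01).1
  -- continuity of A on [s₀, s₁]
  have hAcont : ContinuousOn A (Icc s₀ s₁) := by
    have h1 : ContinuousOn (fun s => A s₀ + ∫ t in s₀..s, A' t) (Icc s₀ s₁) := by
      apply continuousOn_const.add
      have := intervalIntegral.continuousOn_primitive_interval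
        (a := s₀) (b := s₁) (μ := volume) (f := A') (by rwa [uIcc_of_le hs01])
      rwa [uIcc_of_le hs01] at this
    exact h1.congr fun s hs => (hAC s₀ s hs₀ hs.1).2
  -- the sigma-side derivative function
  set D : ℝ → ℝ := fun σ => (σ / u σ) * A' (u σ) with hD
  have hDi : IntegrableOn D (Icc w₀ w₁) := (cov_integrable d w₀ w₁ h0 h01 A').1 hA'i
  have hDii : IntervalIntegrable D volume w₀ w₁ :=
    (intervalIntegrable_iff_integrableOn_Icc_of_le h01).2 hDi
  -- FTC representation of A ∘ u
  have hrep : ∀ x ∈ Icc w₀ w₁, A (u x) = A s₀ + ∫ σ in w₀..x, D σ := by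
    intro x hx
    have hx0 : 0 < x := lt_of_lt_of_le h0 hx.1
    have h1 := (hAC s₀ (u x) hs₀ (sqrt_sq_add_mono d w₀ x h0 hx.1)).2
    have h2 : ∫ t in s₀..u x, A' t = ∫ σ in w₀..x, D σ := by
      rw [intervalIntegral.integral_of_le (sqrt_sq_add_mono d w₀ x h0 hx.1),
        intervalIntegral.integral_of_le hx.1,
        ← integral_Icc_eq_integral_Ioc, ← integral_Icc_eq_integral_Ioc,
        cov_integral d w₀ x h0 hx.1 A']
    rw [h1, h2]
  -- indicator version
  set f : ℝ → ℝ := (Icc w₀ w₁).indicator D with hf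
  have hfi : Integrable f := hDi.integrable_indicator measurableSet_Icc
  have hfD : ∀ x ∈ Icc w₀ w₁, (∫ σ in w₀..x, f σ) = ∫ σ in w₀..x, D σ := by
    intro x hx
    apply intervalIntegral.integral_congr
    intro σ hσ
    rw [uIcc_of_le hx.1] at hσ
    exact indicator_of_mem (Set.mem_Icc.mpr ⟨(Set.mem_Icc.mp hσ).1,
      le_trans (Set.mem_Icc.mp hσ).2 hx.2⟩) D
  -- product identity
  have hmain : w₁ * A s₁ - w₀ * A s₀ = ∫ σ in w₀..w₁, (A (u σ) + σ * D σ) := by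
    have hprod := primitive_mul_id_integral f hfi (A s₀) w₀ w₁
    have hL : A s₀ + ∫ τ in w₀..w₁, f τ = A s₁ := by
      rw [hfD w₁ ⟨h01, le_refl w₁⟩, ← hrep w₁ ⟨h01, le_refl w₁⟩]
    have hR : ∫ σ in w₀..w₁, ((A s₀ + ∫ τ in w₀..σ, f τ) + σ * f σ)
        = ∫ σ in w₀..w₁, (A (u σ) + σ * D σ) := by
      apply intervalIntegral.integral_congr
      intro σ hσ
      rw [uIcc_of_le h01] at hσ
      show (A s₀ + ∫ τ in w₀..σ, f τ) + σ * f σ = A (u σ) + σ * D σ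
      rw [hfD σ hσ, ← hrep σ hσ, hf, indicator_of_mem hσ D]
    rw [← hR, ← hprod, hL]
  -- integrability of the two sigma-side pieces
  have hAui : IntegrableOn (fun σ => A (u σ)) (Icc w₀ w₁) := by
    apply ContinuousOn.integrableOn_Icc
    apply hAcont.comp
    · exact (Real.continuous_sqrt.comp ((continuous_pow 2).add continuous_const)).continuousOn
    · intro σ hσ
      exact ⟨sqrt_sq_add_mono d w₀ σ h0 hσ.1,
        sqrt_sq_add_mono d σ w₁ (lt_of_lt_of_le h0 hσ.1) hσ.2⟩
  have hσDi : IntegrableOn (fun σ => σ * D σ) (Icc w₀ w₁) :=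
    (intervalIntegrable_iff_integrableOn_Icc_of_le h01).1
      (hDii.continuousOn_mul continuousOn_id)
  have hsplit : ∫ σ in w₀..w₁, (A (u σ) + σ * D σ)
      = (∫ σ in Icc w₀ w₁, A (u σ)) + ∫ σ in Icc w₀ w₁, σ * D σ := by
    rw [intervalIntegral.integral_of_le h01, ← integral_Icc_eq_integral_Ioc]
    exact integral_add hAui hσDi
  -- s-side functions
  set G₁ : ℝ → ℝ := fun s => A s * (s / Real.sqrt (s ^ 2 - d ^ 2)) with hG₁
  set G₂ : ℝ → ℝ := fun s => A' s * Real.sqrt (s ^ 2 - d ^ 2) with hG₂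
  set G₃ : ℝ → ℝ := fun s => s ^ (p - 1) / Real.sqrt (s ^ 2 - d ^ 2) with hG₃
  have hWcont : ContinuousOn (fun s : ℝ => Real.sqrt (s ^ 2 - d ^ 2)) (Icc s₀ s₁) :=
    (Real.continuous_sqrt.comp ((continuous_pow 2).sub continuous_const)).continuousOn
  have hWpos : ∀ s ∈ Icc s₀ s₁, 0 < Real.sqrt (s ^ 2 - d ^ 2) := by
    intro s hs
    have : d < s := lt_of_lt_of_le hds₀ hs.1
    exact Real.sqrt_pos.2 (by nlinarith)
  -- transfers
  have e₁ : ∫ σ in Icc w₀ w₁, A (u σ) = ∫ s in Icc s₀ s₁, G₁ s := by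
    rw [hs₀def, hs₁def, hu, cov_integral d w₀ w₁ h0 h01 G₁]
    apply setIntegral_congr_fun measurableSet_Icc
    intro σ hσ
    have hσ0 : 0 < σ := lt_of_lt_of_le h0 hσ.1
    have hu0 : 0 < u σ := hupos σ hσ0
    have hs' : Real.sqrt (Real.sqrt (σ ^ 2 + d ^ 2) ^ 2 - d ^ 2) = σ := husub σ hσ0.le
    simp only [hG₁, hs']
    field_simp
  have e₂ : ∫ σ in Icc w₀ w₁, σ * D σ = ∫ s in Icc s₀ s₁, G₂ s := by
    rw [hs₀def, hs₁def, hu, cov_integral d w₀ w₁ h0 h01 G₂]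
    apply setIntegral_congr_fun measurableSet_Icc
    intro σ hσ
    have hσ0 : 0 < σ := lt_of_lt_of_le h0 hσ.1
    have hs' : Real.sqrt (Real.sqrt (σ ^ 2 + d ^ 2) ^ 2 - d ^ 2) = σ := husub σ hσ0.le
    simp only [hG₂, hD, hs']
    ring
  have e₃ : ∫ s in Icc s₀ s₁, G₃ s = ∫ σ in Icc w₀ w₁, (u σ) ^ (p - 2) := by
    rw [hs₀def, hs₁def, hu, cov_integral d w₀ w₁ h0 h01 G₃]
    apply setIntegral_congr_fun measurableSet_Icc
    intro σ hσ
    have hσ0 : 0 < σ := lt_of_lt_of_le h0 hσ.1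
    have hu0 : 0 < u σ := hupos σ hσ0
    have hs' : Real.sqrt (Real.sqrt (σ ^ 2 + d ^ 2) ^ 2 - d ^ 2) = σ := husub σ hσ0.le
    simp only [hG₃, hs']
    rw [show p - 1 = (p - 2) + 1 by ring, Real.rpow_add_one hu0.ne']
    field_simp
    ring
  -- integrabilities on the s side
  have hG₁i : IntegrableOn G₁ (Icc s₀ s₁) := by
    apply ContinuousOn.integrableOn_Icc
    exact hAcont.mul (continuousOn_id.div hWcont fun s hs => (hWpos s hs).ne')
  have hG₂i : IntegrableOn G₂ (Icc s₀ s₁) := by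
    apply (intervalIntegrable_iff_integrableOn_Icc_of_le hs01).1
    apply IntervalIntegrable.mul_continuousOn (hAC s₀ s₁ hs₀ hs01).1
    rwa [uIcc_of_le hs01]
  have hG₃i : IntegrableOn G₃ (Icc s₀ s₁) := by
    apply ContinuousOn.integrableOn_Icc
    apply ContinuousOn.div _ hWcont fun s hs => (hWpos s hs).ne'
    intro s hs
    exact (Real.continuousAt_rpow_const s (p - 1)
      (Or.inl (lt_of_lt_of_le hs₀ hs.1).ne')).continuousWithinAt
  -- a.e. inequality
  have hae : ∀ᵐ s ∂(volume.restrict (Icc s₀ s₁)), a₃ * G₃ s ≤ G₁ s + G₂ s := by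
    filter_upwards [ae_restrict_of_ae hell, ae_restrict_mem measurableSet_Icc] with s hs hmem
    have hspos : 0 < s := lt_of_lt_of_le hs₀ hmem.1
    obtain ⟨hA1, hA2⟩ := hs hspos
    have hds : d < s := lt_of_lt_of_le hds₀ hmem.1
    have hW : 0 < Real.sqrt (s ^ 2 - d ^ 2) := hWpos s hmem
    have hW2 : Real.sqrt (s ^ 2 - d ^ 2) ^ 2 = s ^ 2 - d ^ 2 :=
      Real.sq_sqrt (by nlinarith)
    have hstep : a₃ * s ^ (p - 1) ≤ A s * s + A' s * (s ^ 2 - d ^ 2) := by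
      have hsp : s ^ (p - 1) = s ^ (p - 2) * s := by
        rw [show p - 1 = (p - 2) + 1 by ring, Real.rpow_add_one hspos.ne']
      rcases le_or_gt 0 (A' s) with h | h
      · have h1 : a₃ * s ^ (p - 2) * s ≤ A s * s := mul_le_mul_of_nonneg_right hA1 hspos.le
        have h2 : (0:ℝ) ≤ A' s * (s ^ 2 - d ^ 2) := mul_nonneg h (by nlinarith)
        nlinarith
      · have h1 : A' s * s ^ 2 ≤ A' s * (s ^ 2 - d ^ 2) := by nlinarith
        have h2 : a₃ * s ^ (p - 2) * s ≤ (A s + s * A' s) * s :=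
          mul_le_mul_of_nonneg_right hA2 hspos.le
        nlinarith
    have hgoal : G₁ s + G₂ s = (A s * s + A' s * (s ^ 2 - d ^ 2)) / Real.sqrt (s ^ 2 - d ^ 2) := by
      simp only [hG₁, hG₂]
      rw [← hW2]
      field_simp
      rw [Real.sqrt_sq hW.le]
    rw [hgoal, hG₃]
    rw [show a₃ * (s ^ (p - 1) / Real.sqrt (s ^ 2 - d ^ 2))
      = (a₃ * s ^ (p - 1)) / Real.sqrt (s ^ 2 - d ^ 2) by ring]
    exact (div_le_div_iff_of_pos_right hW).2 hstep
  -- monotonicity of integrals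
  have hmono : a₃ * (∫ s in Icc s₀ s₁, G₃ s)
      ≤ (∫ s in Icc s₀ s₁, G₁ s) + ∫ s in Icc s₀ s₁, G₂ s := by
    rw [← MeasureTheory.integral_const_mul, ← integral_add hG₁i hG₂i]
    exact setIntegral_mono_ae_restrict (hG₃i.const_mul a₃) (hG₁i.add hG₂i) hae
  -- assembly
  have hIcc : ∫ σ in w₀..w₁, Real.sqrt (σ ^ 2 + d ^ 2) ^ (p - 2)
      = ∫ σ in Icc w₀ w₁, (u σ) ^ (p - 2) := by
    rw [intervalIntegral.integral_of_le h01, ← integral_Icc_eq_integral_Ioc]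
  rw [hIcc, ← e₃]
  rw [show w₁ * A (Real.sqrt (w₁ ^ 2 + d ^ 2)) - w₀ * A (Real.sqrt (w₀ ^ 2 + d ^ 2))
    = w₁ * A s₁ - w₀ * A s₀ by rw [hs₀def, hs₁def]]
  rw [hmain, hsplit, e₁, e₂]
  exact hmono


lemma lemE (p a₃ : ℝ) (hp : 2 ≤ p) (ha₃ : 0 < a₃) (A A' : ℝ → ℝ)
    (hA0 : ∀ s : ℝ, 0 < s → 0 ≤ A s)
    (hAC : ∀ a b : ℝ, 0 < a → a ≤ b →
      IntervalIntegrable A' volume a b ∧ A b = A a + ∫ t in a..b, A' t)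
    (hell : ∀ᵐ (s : ℝ) ∂volume, 0 < s →
      a₃ * s ^ (p - 2) ≤ A s ∧ a₃ * s ^ (p - 2) ≤ A s + s * A' s)
    (d : ℝ) (hd : 0 ≤ d) :
    ∀ w₀ w₁ : ℝ, w₀ ≤ w₁ →
      a₃ * ∫ σ in w₀..w₁, Real.sqrt (σ ^ 2 + d ^ 2) ^ (p - 2)
        ≤ w₁ * A (Real.sqrt (w₁ ^ 2 + d ^ 2)) - w₀ * A (Real.sqrt (w₀ ^ 2 + d ^ 2)) := by
  have hFcont : Continuous fun σ : ℝ => Real.sqrt (σ ^ 2 + d ^ 2) ^ (p - 2) := by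
    apply Continuous.rpow_const (Real.continuous_sqrt.comp ((continuous_pow 2).add
      continuous_const))
    intro x
    right; linarith
  set F : ℝ → ℝ := fun σ => Real.sqrt (σ ^ 2 + d ^ 2) ^ (p - 2) with hF
  -- case with lower endpoint 0
  have E0 : ∀ w₁ : ℝ, 0 ≤ w₁ →
      a₃ * ∫ σ in (0:ℝ)..w₁, F σ ≤ w₁ * A (Real.sqrt (w₁ ^ 2 + d ^ 2)) := by
    intro b hb
    rcases eq_or_lt_of_le hb with h | h
    · simp [← h]
    · -- take the limit ε → 0⁺
      have hcontI : Continuous fun x : ℝ => ∫ σ in x..b, F σ := by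
        have h1 : Continuous fun x : ℝ => ∫ σ in b..x, F σ :=
          intervalIntegral.continuous_primitive (fun c d => hFcont.intervalIntegrable c d) b
        have : (fun x : ℝ => ∫ σ in x..b, F σ) = fun x => -∫ σ in b..x, F σ := by
          ext x; rw [intervalIntegral.integral_symm]
        rw [this]; exact h1.neg
      have htend : Filter.Tendsto (fun ε : ℝ => a₃ * ∫ σ in ε..b, F σ)
          (nhdsWithin 0 (Ioo 0 b)) (nhds (a₃ * ∫ σ in (0:ℝ)..b, F σ)) := by
        apply Filter.Tendsto.const_mul
        exact ((hcontI.tendsto 0).mono_left nhdsWithin_le_nhds)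
      have hev : ∀ᶠ ε in nhdsWithin 0 (Ioo 0 b),
          a₃ * ∫ σ in ε..b, F σ ≤ b * A (Real.sqrt (b ^ 2 + d ^ 2)) := by
        filter_upwards [self_mem_nhdsWithin] with ε hε
        have hkey := key_lemma p a₃ hp ha₃ A A' hA0 hAC hell d ε b hd hε.1 hε.2.le
        have hA : 0 ≤ ε * A (Real.sqrt (ε ^ 2 + d ^ 2)) := by
          apply mul_nonneg hε.1.le
          apply hA0
          exact Real.sqrt_pos.2 (by nlinarith [hε.1])
        linarith
      have hne : (nhdsWithin (0:ℝ) (Ioo 0 b)).NeBot := by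
        apply mem_closure_iff_nhdsWithin_neBot.1
        rw [closure_Ioo h.ne]
        exact ⟨le_refl 0, h.le⟩
      exact le_of_tendsto htend hev
  -- case with both endpoints nonneg
  have Epos : ∀ w₀ w₁ : ℝ, 0 ≤ w₀ → w₀ ≤ w₁ →
      a₃ * ∫ σ in w₀..w₁, F σ
        ≤ w₁ * A (Real.sqrt (w₁ ^ 2 + d ^ 2)) - w₀ * A (Real.sqrt (w₀ ^ 2 + d ^ 2)) := by
    intro w₀ w₁ h0 h01
    rcases eq_or_lt_of_le h0 with h | h
    · have := E0 w₁ (le_trans h0 h01)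
      rw [← h]
      simpa using this
    · exact key_lemma p a₃ hp ha₃ A A' hA0 hAC hell d w₀ w₁ hd h h01
  -- symmetry: F is even, and w ↦ w * A(√(w²+d²)) is odd
  have hFeven : ∀ σ : ℝ, F (-σ) = F σ := by
    intro σ; simp [hF, neg_sq]
  have hflip : ∀ a b : ℝ, (∫ σ in a..b, F σ) = ∫ σ in (-b)..(-a), F σ := by
    intro a b
    rw [← intervalIntegral.integral_comp_neg fun σ => F σ]
    apply intervalIntegral.integral_congr
    intro σ hσ
    exact (hFeven σ).symm
  intro w₀ w₁ h01
  rcases le_or_gt 0 w₀ with h0 | h0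
  · exact Epos w₀ w₁ h0 h01
  rcases le_or_gt w₁ 0 with h1 | h1
  · have := Epos (-w₁) (-w₀) (by linarith) (by linarith)
    rw [hflip w₀ w₁]
    have e1 : (-w₁ : ℝ) ^ 2 = w₁ ^ 2 := neg_sq w₁
    have e2 : (-w₀ : ℝ) ^ 2 = w₀ ^ 2 := neg_sq w₀
    rw [e1, e2] at this
    linarith
  · have ha := Epos (-(0:ℝ)) (-w₀) (by linarith) (by linarith)
    have hb := E0 w₁ h1.le
    have e2 : (-w₀ : ℝ) ^ 2 = w₀ ^ 2 := neg_sq w₀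
    rw [e2] at ha
    norm_num at ha
    have hsplit : (∫ σ in w₀..w₁, F σ) = (∫ σ in w₀..(0:ℝ), F σ) + ∫ σ in (0:ℝ)..w₁, F σ :=
      (intervalIntegral.integral_add_adjacent_intervals
        (hFcont.intervalIntegrable _ _) (hFcont.intervalIntegrable _ _)).symm
    have hneg : (∫ σ in w₀..(0:ℝ), F σ) = ∫ σ in (-(0:ℝ))..(-w₀), F σ := hflip w₀ 0
    norm_num at hneg
    rw [hsplit, hneg, mul_add]
    linarith

end Helpers

/-- Relation (finale) of the paper: for `p ≥ 2` and a locally absolutely continuous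
`A : (0,∞) → [0,∞)` satisfying `A(s) ≥ a₃ s^(p-2)` and `A(s) + s A'(s) ≥ a₃ s^(p-2)` a.e. on
`(0,∞)`, one has, for all `ξ, ζ`,
`(φ(ξ) − φ(ζ)) · (ξ − ζ) ≥ a₃ |ξ − ζ|² ∫₀¹ |ζ + t(ξ − ζ)|^(p-2) dt`.
Local absolute continuity is encoded through the fundamental theorem of calculus. -/
theorem segment_integral_estimate (N : ℕ) (hN : 1 ≤ N) (p a₃ : ℝ) (hp : 2 ≤ p) (ha₃ : 0 < a₃)
    (A A' : ℝ → ℝ)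
    (hA0 : ∀ s : ℝ, 0 < s → 0 ≤ A s)
    (hAC : ∀ a b : ℝ, 0 < a → a ≤ b →
      IntervalIntegrable A' volume a b ∧ A b = A a + ∫ t in a..b, A' t)
    (hell : ∀ᵐ (s : ℝ) ∂volume, 0 < s →
      a₃ * s ^ (p - 2) ≤ A s ∧ a₃ * s ^ (p - 2) ≤ A s + s * A' s) :
    ∀ ξ ζ : EuclideanSpace ℝ (Fin N),
      a₃ * ‖ξ - ζ‖ ^ 2 * (∫ t in (0:ℝ)..1, ‖ζ + t • (ξ - ζ)‖ ^ (p - 2)) ≤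
        ⟪phiA A ξ - phiA A ζ, ξ - ζ⟫ := by
  intro ξ ζ
  by_cases hv : ξ - ζ = 0
  · rw [hv]
    have hξζ : ξ = ζ := sub_eq_zero.1 hv
    simp [hξζ]
  · set v : EuclideanSpace ℝ (Fin N) := ξ - ζ with hvdef
    have hn : 0 < ‖v‖ := norm_pos_iff.2 hv
    set n : ℝ := ‖v‖ with hndef
    set I : ℝ := ⟪ζ, v⟫ with hIdef
    set c : ℝ := I / n ^ 2 with hcdef
    have hdd : 0 ≤ ‖ζ‖ ^ 2 - I ^ 2 / n ^ 2 := by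
      have hCS : I * I ≤ ⟪ζ, ζ⟫ * ⟪v, v⟫ := real_inner_mul_inner_self_le ζ v
      rw [real_inner_self_eq_norm_sq, real_inner_self_eq_norm_sq] at hCS
      rw [sub_nonneg, div_le_iff₀ (by positivity : (0:ℝ) < n ^ 2)]
      calc I ^ 2 = I * I := sq I
        _ ≤ ‖ζ‖ ^ 2 * ‖v‖ ^ 2 := hCS
        _ = ‖ζ‖ ^ 2 * n ^ 2 := by rw [hndef]
    set d : ℝ := Real.sqrt (‖ζ‖ ^ 2 - I ^ 2 / n ^ 2) with hddef
    have hd : 0 ≤ d := Real.sqrt_nonneg _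
    have hd2 : d ^ 2 = ‖ζ‖ ^ 2 - I ^ 2 / n ^ 2 := Real.sq_sqrt hdd
    -- norm along the segment
    have f1 : ∀ t : ℝ, ‖ζ + t • v‖ = Real.sqrt ((n * t + c * n) ^ 2 + d ^ 2) := by
      intro t
      have harg : (n * t + c * n) ^ 2 + d ^ 2 = ‖ζ + t • v‖ ^ 2 := by
        have hexp : ‖ζ + t • v‖ ^ 2 = ‖ζ‖ ^ 2 + 2 * (t * I) + t ^ 2 * n ^ 2 := by
          rw [norm_add_sq_real, real_inner_smul_right, norm_smul]
          simp only [Real.norm_eq_abs, mul_pow, sq_abs, hIdef, hndef]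
          try ring
        rw [hexp, hd2, hcdef]
        field_simp
        ring
      rw [harg, Real.sqrt_sq (norm_nonneg _)]
    -- inner product with phiA along the segment
    have f2 : ∀ t : ℝ, ⟪phiA A (ζ + t • v), v⟫
        = n * ((n * t + c * n) * A (Real.sqrt ((n * t + c * n) ^ 2 + d ^ 2))) := by
      intro t
      by_cases hz : ζ + t • v = 0
      · have hnz : ‖ζ + t • v‖ = 0 := by rw [hz, norm_zero]
        have hw : n * t + c * n = 0 := by
          rw [f1 t] at hnz
          have h1 : (n * t + c * n) ^ 2 + d ^ 2 ≤ 0 := Real.sqrt_eq_zero'.1 hnz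
          nlinarith [sq_nonneg (n * t + c * n), sq_nonneg d]
        rw [phiA, if_pos hz, hw]
        simp
      · rw [phiA, if_neg hz]
        rw [real_inner_smul_left]
        have hinner : ⟪ζ + t • v, v⟫ = (n * t + c * n) * n := by
          rw [inner_add_left, real_inner_smul_left, real_inner_self_eq_norm_sq,
            ← hIdef, ← hndef, hcdef]
          field_simp
          ring
        rw [hinner, f1 t]
        ring
    -- rewrite the right-hand side
    have hξ : ξ = ζ + (1:ℝ) • v := by
      rw [hvdef, one_smul]
      abel
    have hζ : ζ = ζ + (0:ℝ) • v := by
      rw [zero_smul, add_zero]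
    have hRHS : ⟪phiA A ξ - phiA A ζ, ξ - ζ⟫
        = n * ((n * 1 + c * n) * A (Real.sqrt ((n * 1 + c * n) ^ 2 + d ^ 2)))
          - n * ((n * 0 + c * n) * A (Real.sqrt ((n * 0 + c * n) ^ 2 + d ^ 2))) := by
      rw [inner_sub_left, ← hvdef]
      rw [show phiA A ξ = phiA A (ζ + (1:ℝ) • v) by rw [← hξ],
        show phiA A ζ = phiA A (ζ + (0:ℝ) • v) by rw [← hζ]]
      rw [f2 1, f2 0]
    -- rewrite the integral
    have hInt : (∫ t in (0:ℝ)..1, ‖ζ + t • v‖ ^ (p - 2))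
        = n⁻¹ * ∫ w in (n * 0 + c * n)..(n * 1 + c * n),
            Real.sqrt (w ^ 2 + d ^ 2) ^ (p - 2) := by
      have h1 : (∫ t in (0:ℝ)..1, ‖ζ + t • v‖ ^ (p - 2))
          = ∫ t in (0:ℝ)..1, (fun w => Real.sqrt (w ^ 2 + d ^ 2) ^ (p - 2)) (n * t + c * n) := by
        apply intervalIntegral.integral_congr
        intro t ht
        show ‖ζ + t • v‖ ^ (p - 2) = Real.sqrt ((n * t + c * n) ^ 2 + d ^ 2) ^ (p - 2)
        rw [f1 t]
      rw [h1, intervalIntegral.integral_comp_mul_add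
        (fun w => Real.sqrt (w ^ 2 + d ^ 2) ^ (p - 2)) hn.ne' (c * n)]
      simp [smul_eq_mul]
    -- apply lemE
    have hle := lemE p a₃ hp ha₃ A A' hA0 hAC hell d hd (n * 0 + c * n) (n * 1 + c * n)
      (by nlinarith)
    rw [hRHS, hInt]
    have hfin : a₃ * n ^ 2 * (n⁻¹ * ∫ w in (n * 0 + c * n)..(n * 1 + c * n),
        Real.sqrt (w ^ 2 + d ^ 2) ^ (p - 2))
        = n * (a₃ * ∫ w in (n * 0 + c * n)..(n * 1 + c * n),
            Real.sqrt (w ^ 2 + d ^ 2) ^ (p - 2)) := by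
      field_simp
    rw [hfin]
    calc n * (a₃ * ∫ w in (n * 0 + c * n)..(n * 1 + c * n),
          Real.sqrt (w ^ 2 + d ^ 2) ^ (p - 2))
        ≤ n * ((n * 1 + c * n) * A (Real.sqrt ((n * 1 + c * n) ^ 2 + d ^ 2))
            - (n * 0 + c * n) * A (Real.sqrt ((n * 0 + c * n) ^ 2 + d ^ 2))) :=
          mul_le_mul_of_nonneg_left hle hn.le
      _ = n * ((n * 1 + c * n) * A (Real.sqrt ((n * 1 + c * n) ^ 2 + d ^ 2)))
          - n * ((n * 0 + c * n) * A (Real.sqrt ((n * 0 + c * n) ^ 2 + d ^ 2))) := by ring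
end

section
/- Let p ≥ 2 and N ≥ 1. For all ξ, ζ ∈ ℝ^N one has ∫₀¹ |ζ + t(ξ − ζ)|^(p-2) dt ≥ (2^(2-p)/(p−1)) · |ξ − ζ|^(p-2). -/
open MeasureTheory
open intervalIntegral Set

lemma rpow_int01 (q : ℝ) (hq : 0 ≤ q) (c : ℝ) :
    ∫ t in (0:ℝ)..c, t ^ q = c ^ (q+1) / (q+1) := by
  rw [integral_rpow (Or.inl (by linarith))]
  rw [Real.zero_rpow (by positivity)]
  ring

lemma abs_integral_lower (q a : ℝ) (hq : 0 ≤ q) :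
    (2:ℝ) ^ (-q) / (q + 1) ≤ ∫ t in (0:ℝ)..1, |t - a| ^ q := by
  have hq1 : (0:ℝ) < q + 1 := by linarith
  have hcont : Continuous fun t : ℝ => |t - a| ^ q :=
    ((continuous_id.sub continuous_const).abs).rpow_const (fun x => Or.inr hq)
  have hcont' : Continuous fun t : ℝ => t ^ q :=
    continuous_id.rpow_const (fun x => Or.inr hq)
  have h2le : (2:ℝ) ^ (-q) ≤ 1 :=
    Real.rpow_le_one_of_one_le_of_nonpos one_le_two (by linarith)
  rcases le_or_gt a 0 with ha | ha
  · -- a ≤ 0 : |t - a| ≥ t on [0,1]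
    have hmono : ∫ t in (0:ℝ)..1, t ^ q ≤ ∫ t in (0:ℝ)..1, |t - a| ^ q := by
      apply intervalIntegral.integral_mono_on zero_le_one
        (hcont'.intervalIntegrable 0 1) (hcont.intervalIntegrable 0 1)
      intro t ht
      exact Real.rpow_le_rpow ht.1 (le_trans (by linarith) (le_abs_self (t - a))) hq
    have := rpow_int01 q hq 1
    rw [Real.one_rpow] at this
    rw [this] at hmono
    calc (2:ℝ)^(-q)/(q+1) ≤ 1/(q+1) := by gcongr
      _ ≤ _ := hmono
  rcases le_or_gt 1 a with ha1 | ha1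
  · -- 1 ≤ a : |t - a| ≥ 1 - t on [0,1]
    have hmono : ∫ t in (0:ℝ)..1, (1 - t) ^ q ≤ ∫ t in (0:ℝ)..1, |t - a| ^ q := by
      apply intervalIntegral.integral_mono_on zero_le_one
        (((continuous_const.sub continuous_id').rpow_const (fun x => Or.inr hq)).intervalIntegrable 0 1)
        (hcont.intervalIntegrable 0 1)
      intro t ht
      refine Real.rpow_le_rpow (by show (0:ℝ) ≤ 1 - t; linarith [ht.2]) ?_ hq
      calc 1 - t ≤ a - t := by linarith
        _ = -(t - a) := by ring
        _ ≤ |t - a| := neg_le_abs _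
    have hcs : ∫ t in (0:ℝ)..1, (1 - t) ^ q = 1 / (q+1) := by
      have := intervalIntegral.integral_comp_sub_left (fun x : ℝ => x ^ q) 1 (a := 0) (b := 1)
      simp only [sub_self, sub_zero] at this
      rw [this, rpow_int01 q hq 1, Real.one_rpow]
    rw [hcs] at hmono
    calc (2:ℝ)^(-q)/(q+1) ≤ 1/(q+1) := by gcongr
      _ ≤ _ := hmono
  · -- 0 < a < 1
    have hi1 : IntervalIntegrable (fun t : ℝ => |t - a| ^ q) volume 0 a :=
      hcont.intervalIntegrable 0 a
    have hi2 : IntervalIntegrable (fun t : ℝ => |t - a| ^ q) volume a 1 :=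
      hcont.intervalIntegrable a 1
    have hsplit : ∫ t in (0:ℝ)..1, |t - a| ^ q
        = (∫ t in (0:ℝ)..a, |t - a| ^ q) + ∫ t in a..1, |t - a| ^ q :=
      (intervalIntegral.integral_add_adjacent_intervals hi1 hi2).symm
    have e1 : (∫ t in (0:ℝ)..a, |t - a| ^ q) = a ^ (q+1) / (q+1) := by
      have hc : ∫ t in (0:ℝ)..a, |t - a| ^ q = ∫ t in (0:ℝ)..a, (a - t) ^ q := by
        apply intervalIntegral.integral_congr
        intro t ht
        rw [Set.uIcc_of_le (le_of_lt ha)] at ht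
        show |t - a| ^ q = (a - t) ^ q
        rw [abs_sub_comm, abs_of_nonneg (by linarith [ht.2])]
      rw [hc]
      have := intervalIntegral.integral_comp_sub_left (fun x : ℝ => x ^ q) a (a := 0) (b := a)
      rw [this]
      simp only [sub_self, sub_zero]
      exact rpow_int01 q hq a
    have e2 : (∫ t in a..(1:ℝ), |t - a| ^ q) = (1 - a) ^ (q+1) / (q+1) := by
      have hc : ∫ t in a..(1:ℝ), |t - a| ^ q = ∫ t in a..(1:ℝ), (t - a) ^ q := by
        apply intervalIntegral.integral_congr
        intro t ht
        rw [Set.uIcc_of_le (le_of_lt ha1)] at ht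
        show |t - a| ^ q = (t - a) ^ q
        rw [abs_of_nonneg (by linarith [ht.1])]
      rw [hc]
      have := intervalIntegral.integral_comp_sub_right (fun x : ℝ => x ^ q) a (a := a) (b := 1)
      rw [this]
      simp only [sub_self]
      exact rpow_int01 q hq (1 - a)
    have hconv : (2:ℝ) ^ (-q) ≤ a ^ (q+1) + (1-a) ^ (q+1) := by
      have hcv : ConvexOn ℝ (Set.Ici 0) fun x : ℝ => x ^ (q+1) :=
        convexOn_rpow (by linarith)
      have hcx := hcv.2
        (Set.mem_Ici.mpr (le_of_lt ha)) (Set.mem_Ici.mpr (show (0:ℝ) ≤ 1 - a by linarith))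
        (by norm_num : (0:ℝ) ≤ 1/2) (by norm_num : (0:ℝ) ≤ 1/2) (by norm_num)
      simp only [smul_eq_mul] at hcx
      have hmid : (1/2 : ℝ) * a + 1/2 * (1-a) = 1/2 := by ring
      rw [hmid] at hcx
      have hhalf : ((1:ℝ)/2) ^ (q+1) = 2 ^ (-(q+1)) := by
        rw [one_div, Real.rpow_neg (by norm_num), Real.inv_rpow (by norm_num)]
      have h2q : (2:ℝ) ^ (-q) = 2 * 2 ^ (-(q+1)) := by
        rw [show (-q) = 1 + (-(q+1)) by ring, Real.rpow_add (by norm_num), Real.rpow_one]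
      rw [hhalf] at hcx
      rw [h2q]
      linarith
    rw [hsplit, e1, e2, ← add_div]
    gcongr


/-- Lower bound for the segment integral: for `p ≥ 2` and all `ξ, ζ ∈ ℝ^N`,
`∫₀¹ |ζ + t(ξ − ζ)|^(p-2) dt ≥ (2^(2-p)/(p-1)) |ξ − ζ|^(p-2)`. -/
theorem segment_integral_lower_bound (N : ℕ) (hN : 1 ≤ N) (p : ℝ) (hp : 2 ≤ p)
    (ξ ζ : EuclideanSpace ℝ (Fin N)) :
    (2 : ℝ) ^ (2 - p) / (p - 1) * ‖ξ - ζ‖ ^ (p - 2) ≤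
      ∫ t in (0:ℝ)..1, ‖ζ + t • (ξ - ζ)‖ ^ (p - 2) := by
  set v := ξ - ζ with hv
  set q := p - 2 with hqdef
  have hq : 0 ≤ q := by rw [hqdef]; linarith
  set t₀ := -((inner ℝ ζ v : ℝ)) / ‖v‖ ^ 2 with ht0
  have hpt : ∀ t : ℝ, |t - t₀| ^ q * ‖v‖ ^ q ≤ ‖ζ + t • v‖ ^ q := by
    intro t
    have key : |t - t₀| * ‖v‖ ≤ ‖ζ + t • v‖ := by
      rcases eq_or_ne v 0 with h0 | h0
      · rw [h0]
        simp [norm_nonneg]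
      · have hnv : (0:ℝ) < ‖v‖ := norm_pos_iff.mpr h0
        have hinner : (inner ℝ (ζ + t • v) v : ℝ) = (t - t₀) * ‖v‖ ^ 2 := by
          rw [inner_add_left, real_inner_smul_left, real_inner_self_eq_norm_sq, ht0]
          field_simp
          ring
        have hCS := abs_real_inner_le_norm (ζ + t • v) v
        rw [hinner, abs_mul, abs_of_nonneg (by positivity : (0:ℝ) ≤ ‖v‖ ^ 2)] at hCS
        nlinarith [abs_nonneg (t - t₀), norm_nonneg (ζ + t • v)]
    calc |t - t₀| ^ q * ‖v‖ ^ q = (|t - t₀| * ‖v‖) ^ q :=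
          (Real.mul_rpow (abs_nonneg _) (norm_nonneg _)).symm
      _ ≤ ‖ζ + t • v‖ ^ q := Real.rpow_le_rpow (by positivity) key hq
  have hcont1 : Continuous fun t : ℝ => ‖ζ + t • v‖ ^ q :=
    ((continuous_const.add (continuous_id'.smul continuous_const)).norm).rpow_const
      (fun x => Or.inr hq)
  have hcont2 : Continuous fun t : ℝ => |t - t₀| ^ q * ‖v‖ ^ q :=
    (((continuous_id'.sub continuous_const).abs).rpow_const (fun x => Or.inr hq)).mul
      continuous_const
  have hmono : (∫ t in (0:ℝ)..1, |t - t₀| ^ q * ‖v‖ ^ q)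
      ≤ ∫ t in (0:ℝ)..1, ‖ζ + t • v‖ ^ q :=
    intervalIntegral.integral_mono_on zero_le_one (hcont2.intervalIntegrable 0 1)
      (hcont1.intervalIntegrable 0 1) (fun t _ => hpt t)
  have heq : (∫ t in (0:ℝ)..1, |t - t₀| ^ q * ‖v‖ ^ q)
      = (∫ t in (0:ℝ)..1, |t - t₀| ^ q) * ‖v‖ ^ q :=
    intervalIntegral.integral_mul_const _ _
  have hkey := abs_integral_lower q t₀ hq
  calc (2:ℝ) ^ (2 - p) / (p - 1) * ‖v‖ ^ q
      = 2 ^ (-q) / (q + 1) * ‖v‖ ^ q := by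
        rw [show (2:ℝ) - p = -q by rw [hqdef]; ring, show p - 1 = q + 1 by rw [hqdef]; ring]
    _ ≤ (∫ t in (0:ℝ)..1, |t - t₀| ^ q) * ‖v‖ ^ q :=
        mul_le_mul_of_nonneg_right hkey (Real.rpow_nonneg (norm_nonneg _) q)
    _ = ∫ t in (0:ℝ)..1, |t - t₀| ^ q * ‖v‖ ^ q := heq.symm
    _ ≤ _ := hmono
end
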